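/- arXiv:1508.03798 — 16 statements merged into one kernel-verified Lean document; each statement's English description precedes it below -/
import Mathlib

section
/- Let R be a commutative ring. A multiplicative subset S of R (not containing 0) is a maximal element (with respect to inclusion) of the set of multiplicative subsets T with 0 ∉ T if and only if S = R \ p for some minimal prime ideal p of R. -/
/-- Let `R` be a commutative ring. A multiplicative subset `S` of `R`
(not containing `0`) is a maximal element (with respect to inclusion) of the set of
multiplicative subsets `T` with `0 ∉ T` if and only if `S = R \ p` for some minimal
prime ideal `p` of `R`. -/
theorem stmt0 {R : Type*} [CommRing R] (S : Submonoid R) (h0 : (0 : R) ∉ S) :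
    (∀ T : Submonoid R, (0 : R) ∉ T → S ≤ T → T = S) ↔
      ∃ p : Ideal R, p ∈ minimalPrimes R ∧ (S : Set R) = (p : Set R)ᶜ := by
  constructor
  · intro hmax
    -- find a prime disjoint from S
    obtain ⟨p, hp, -, hdisj⟩ := Ideal.exists_le_prime_disjoint (⊥ : Ideal R) S
      (by simpa using h0)
    have hSle : S ≤ p.primeCompl := fun x hx => Set.disjoint_right.mp hdisj hx
    have hSp : S = p.primeCompl := (hmax p.primeCompl (fun h => h p.zero_mem) hSle).symm
    refine ⟨p, ⟨⟨hp, bot_le⟩, ?_⟩, by rw [hSp]; rfl⟩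
    rintro q ⟨hq, -⟩ hqp x hx
    by_contra hxq
    have hqle : S ≤ q.primeCompl := hSle.trans fun y hy hyq => hy (hqp hyq)
    have := hmax q.primeCompl (fun h => h q.zero_mem) hqle
    exact (hSp ▸ this ▸ hxq : x ∈ p.primeCompl) hx
  · rintro ⟨p, hp, hS⟩ T hT0 hST
    ext x
    refine ⟨fun hx => ?_, fun hx => hST hx⟩
    -- find a prime disjoint from T
    obtain ⟨q, hq, -, hdisj⟩ := Ideal.exists_le_prime_disjoint (⊥ : Ideal R) T
      (by simpa using hT0)
    have hqp : q ≤ p := by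
      intro y hyq
      by_contra hyp
      have : y ∈ S := by have : y ∈ (S : Set R) := hS ▸ hyp; exact this
      exact Set.disjoint_left.mp hdisj hyq (hST this)
    have : p ≤ q := hp.2 ⟨hq, bot_le⟩ hqp
    -- so q = p, hence T disjoint from p, i.e. T ⊆ S
    have hxp : x ∉ p := fun hxp => Set.disjoint_left.mp hdisj (this hxp) hx
    have : x ∈ (S : Set R) := by rw [hS]; exact hxp
    exact this
end

section
/- Let Q be a ring in which every chain of left annihilator ideals stabilizes (ACC on left annihilators). If x, y ∈ Q satisfy y·x = 1, then x·y = 1, i.e., x and y are units. -/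
/-- Let `Q` be a ring in which every ascending chain of left
annihilator ideals stabilizes (ACC on left annihilators). If `x, y ∈ Q` satisfy
`y * x = 1`, then `x * y = 1`. -/
theorem stmt2 {Q : Type*} [Ring Q]
    (hacc : ∀ f : ℕ → Set Q,
      (∀ n : ℕ, ∃ X : Set Q, f n = {q : Q | ∀ a ∈ X, q * a = 0}) →
      Monotone f → ∃ n : ℕ, ∀ m : ℕ, n ≤ m → f m = f n)
    (x y : Q) (h : y * x = 1) : x * y = 1 := by
  have key : ∀ n : ℕ, y ^ n * x ^ n = 1 := by
    intro n
    induction n with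
    | zero => simp
    | succ n ih =>
      rw [pow_succ y n, pow_succ' x n, mul_assoc, ← mul_assoc y x, h, one_mul, ih]
  set f : ℕ → Set Q := fun n => {q : Q | ∀ a ∈ ({x ^ n} : Set Q), q * a = 0} with hf
  have hform : ∀ n : ℕ, ∃ X : Set Q, f n = {q : Q | ∀ a ∈ X, q * a = 0} :=
    fun n => ⟨{x ^ n}, rfl⟩
  have hmono : Monotone f := by
    intro a b hab q hq
    intro z hz
    rw [Set.mem_singleton_iff] at hz
    subst hz
    have hqa : q * x ^ a = 0 := hq (x ^ a) rfl
    obtain ⟨k, rfl⟩ := Nat.exists_eq_add_of_le hab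
    rw [pow_add, ← mul_assoc, hqa, zero_mul]
  obtain ⟨n, hn⟩ := hacc f hform hmono
  have hmem : (1 - x * y) * y ^ n ∈ f (n + 1) := by
    intro z hz
    rw [Set.mem_singleton_iff] at hz
    subst hz
    rw [pow_succ x n, ← mul_assoc, mul_assoc (1 - x * y), key n, mul_one,
      sub_mul, one_mul, mul_assoc, h, mul_one, sub_self]
  have hmem' : (1 - x * y) * y ^ n ∈ f n := by
    rw [← hn (n + 1) (Nat.le_succ n)]; exact hmem
  have := hmem' (x ^ n) rfl
  rw [mul_assoc, key n, mul_one, sub_eq_zero] at this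
  exact this.symm
end

section
/- Let Q be a ring containing no infinite direct sum of nonzero left ideals. If x, y ∈ Q satisfy y·x = 1, then x·y = 1. -/
/-- Let `Q` be a ring containing no infinite direct sum of nonzero
left ideals. If `x, y ∈ Q` satisfy `y * x = 1`, then `x * y = 1`. -/
theorem stmt3 {Q : Type*} [Ring Q]
    (h : ¬ ∃ f : ℕ → Ideal Q, (∀ n, f n ≠ ⊥) ∧ iSupIndep f)
    (x y : Q) (hyx : y * x = 1) : x * y = 1 := by
  by_contra hxy
  set z : Q := 1 - x * y with hz
  have hzx : z * x = 0 := by rw [hz, sub_mul, one_mul, mul_assoc, hyx, mul_one, sub_self]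
  have hyz : y * z = 0 := by rw [hz, mul_sub, mul_one, ← mul_assoc, hyx, one_mul, sub_self]
  have hzz : z * z = z := by
    rw [hz, mul_sub (1 - x*y) 1 (x*y), mul_one, ← mul_assoc, ← hz, hzx, zero_mul, sub_zero]
  have hpow : ∀ n : ℕ, y ^ n * x ^ n = 1 := by
    intro n
    induction n with
    | zero => simp
    | succ n ih =>
      rw [pow_succ, pow_succ', mul_assoc, ← mul_assoc y x, hyx, one_mul, ih]
  set e : ℕ → Q := fun n => x ^ n * z * y ^ n with he
  have cancel : ∀ (a b : Q) (n : ℕ), a * y ^ n * (x ^ n * b) = a * b := by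
    intro a b n
    rw [mul_assoc, ← mul_assoc (y ^ n), hpow n, one_mul]
  have hzxk : ∀ k : ℕ, z * x ^ (k + 1) = 0 := by
    intro k; rw [pow_succ', ← mul_assoc, hzx, zero_mul]
  have hykz : ∀ k : ℕ, y ^ (k + 1) * z = 0 := by
    intro k; rw [pow_succ, mul_assoc, hyz, mul_zero]
  have orth : ∀ i j : ℕ, i ≠ j → e i * e j = 0 := by
    intro i j hij
    rcases Nat.lt_or_ge i j with hlt | hge
    · obtain ⟨k, rfl⟩ : ∃ k, j = i + (k + 1) :=
        ⟨j - i - 1, by omega⟩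
      show x ^ i * z * y ^ i * (x ^ (i + (k+1)) * z * y ^ (i + (k+1))) = 0
      rw [pow_add x i (k+1), mul_assoc (x ^ i) (x ^ (k+1)) z,
        mul_assoc (x ^ i) (x ^ (k+1) * z) (y ^ (i + (k+1))), cancel,
        ← mul_assoc, ← mul_assoc, mul_assoc (x ^ i) z (x ^ (k+1)), hzxk,
        mul_zero, zero_mul, zero_mul]
    · obtain ⟨k, rfl⟩ : ∃ k, i = j + (k + 1) := ⟨i - j - 1, by omega⟩
      show x ^ (j + (k+1)) * z * y ^ (j + (k+1)) * (x ^ j * z * y ^ j) = 0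
      rw [add_comm j (k+1), pow_add y (k+1) j,
        ← mul_assoc (x ^ ((k+1)+j) * z) (y ^ (k+1)) (y ^ j),
        mul_assoc (x ^ j) z (y ^ j), cancel,
        mul_assoc (x ^ ((k+1)+j) * z) (y ^ (k+1)) (z * y ^ j),
        ← mul_assoc (y ^ (k+1)) z (y ^ j), hykz, zero_mul, mul_zero]
  have idem : ∀ n, e n * e n = e n := by
    intro n
    show x ^ n * z * y ^ n * (x ^ n * z * y ^ n) = x ^ n * z * y ^ n
    rw [mul_assoc (x ^ n) z (y ^ n), mul_assoc (x ^ n) (z * y ^ n),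
      cancel, ← mul_assoc z z, hzz]
  have hne : ∀ n, e n ≠ 0 := by
    intro n hn
    apply hxy
    have h1 : y ^ n * e n * x ^ n = 0 := by rw [hn, mul_zero, zero_mul]
    have h2 : y ^ n * e n * x ^ n = z := by
      show y ^ n * (x ^ n * z * y ^ n) * x ^ n = z
      rw [← mul_assoc (y ^ n) (x ^ n * z) (y ^ n), ← mul_assoc (y ^ n) (x ^ n) z,
        hpow n, one_mul, mul_assoc z (y ^ n) (x ^ n), hpow n, mul_one]
    rw [h2, hz, sub_eq_zero] at h1
    exact h1.symm
  apply h
  refine ⟨fun n => Ideal.span {e n}, fun n => ?_, ?_⟩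
  · rw [Ne, Ideal.span_singleton_eq_bot]
    exact hne n
  · intro i
    set φ : Q →ₗ[Q] Q := LinearMap.toSpanSingleton Q Q (e i) with hφ
    have hsup : (⨆ j, ⨆ (_ : j ≠ i), Ideal.span {e j}) ≤ LinearMap.ker φ := by
      refine iSup₂_le fun j hj => ?_
      rw [Ideal.span_singleton_le_iff_mem]
      show e j * e i = 0
      exact orth j i hj
    rw [disjoint_iff_inf_le]
    intro a ⟨hai, hasup⟩
    obtain ⟨q, rfl⟩ := Ideal.mem_span_singleton'.mp hai
    have h0 := hsup hasup
    rw [LinearMap.mem_ker, hφ, LinearMap.toSpanSingleton_apply, smul_eq_mul] at h0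
    have h1 : q * e i = q * e i * e i := by rw [mul_assoc, idem]
    rw [h1]
    exact h0
end

section
/- Let R be a ring, S a left denominator set of R consisting of regular elements such that S = R ∩ Q'^*, where Q' = S^{-1}R and Q'^* is the group of units of Q'. Assume Q' is left Noetherian. If y·z ∈ S for some y, z ∈ R, then y ∈ S and z ∈ S. -/
/-- In a left Noetherian ring, right inverses are two-sided (Dedekind-finiteness). -/
lemma mul_eq_one_symm_of_noetherian {Q' : Type*} [Ring Q'] [IsNoetherianRing Q']
    {a b : Q'} (h : a * b = 1) : b * a = 1 := by
  let f : Q' →ₗ[Q'] Q' :=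
    { toFun := fun x => x * b
      map_add' := fun x y => add_mul x y b
      map_smul' := fun c x => by simp [smul_eq_mul, mul_assoc] }
  have hs : Function.Surjective f := fun y => ⟨y * a, by simp [f, mul_assoc, h]⟩
  have hi : Function.Injective f := IsNoetherian.injective_of_surjective_endomorphism f hs
  have : f (b * a) = f 1 := by simp [f, mul_assoc, h]
  simpa using hi this

/-- Let `R` be a ring, `S` a left denominator set of `R` consisting of
regular elements such that `S = R ∩ Q'^*`, where `Q' = S⁻¹R` (modelled by a ring `Q'`
together with a ring homomorphism `φ : R → Q'` which is injective, sends elements of `S`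
to units, and such that every element of `Q'` is a left fraction `(φ s)⁻¹ (φ r)`).
Assume `Q'` is left Noetherian. If `y * z ∈ S` for some `y, z ∈ R`, then `y ∈ S` and
`z ∈ S`. -/
theorem stmt5 {R Q' : Type*} [Ring R] [Ring Q'] (S : Submonoid R)
    (hreg : ∀ s ∈ S, IsRegular s)
    (hOre : ∀ (r : R), ∀ s ∈ S, ∃ s' ∈ S, ∃ r' : R, s' * r = r' * s)
    (hden : ∀ (r : R), ∀ s ∈ S, r * s = 0 → ∃ t ∈ S, t * r = 0)
    (φ : R →+* Q') (hinj : Function.Injective φ)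
    (hunit : ∀ s ∈ S, IsUnit (φ s))
    (hfrac : ∀ q : Q', ∃ s ∈ S, ∃ r : R, φ s * q = φ r)
    (hmem : ∀ r : R, r ∈ S ↔ IsUnit (φ r))
    [IsNoetherianRing Q']
    (y z : R) (hyz : y * z ∈ S) : y ∈ S ∧ z ∈ S := by
  obtain ⟨u, hu⟩ := hunit _ hyz
  have hu' : φ y * φ z = (u : Q') := by rw [hu, map_mul]
  have h1 : φ y * (φ z * (↑u⁻¹ : Q')) = 1 := by
    rw [← mul_assoc, hu', u.mul_inv]
  have h2 : (φ z * (↑u⁻¹ : Q')) * φ y = 1 := mul_eq_one_symm_of_noetherian h1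
  have hyu : IsUnit (φ y) := ⟨⟨φ y, φ z * (↑u⁻¹ : Q'), h1, h2⟩, rfl⟩
  have hzw : IsUnit (φ z * (↑u⁻¹ : Q')) := ⟨⟨φ z * (↑u⁻¹ : Q'), φ y, h2, h1⟩, rfl⟩
  have hzu : IsUnit (φ z) := by
    have := hzw.mul u.isUnit
    simpa [mul_assoc, u.inv_mul] using this
  exact ⟨(hmem y).mpr hyu, (hmem z).mpr hzu⟩
end

section
/- Let R be a commutative ring and I a nil ideal of R. Then the map S ↦ π(S) gives a bijection between multiplicative subsets S of R with 0 ∉ S and S + I ⊆ S, and multiplicative subsets T of R/I with 0 ∉ T; the inverse is T ↦ π^{-1}(T), where π : R → R/I is the quotient map. -/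
/-- Let `R` be a commutative ring and `I` a nil ideal of `R`. Then the
map `S ↦ π(S)` gives a bijection between multiplicative subsets `S` of `R` with `0 ∉ S`
and `S + I ⊆ S`, and multiplicative subsets `T` of `R/I` with `0 ∉ T`; the inverse is
`T ↦ π⁻¹(T)`, where `π : R → R/I` is the quotient map. -/
theorem stmt6 {R : Type*} [CommRing R] (I : Ideal R) (hI : ∀ a ∈ I, IsNilpotent a) :
    (∀ S : Submonoid R, (0 : R) ∉ S → (∀ s ∈ S, ∀ a ∈ I, s + a ∈ S) →
      ((0 : R ⧸ I) ∉ S.map (Ideal.Quotient.mk I).toMonoidHom ∧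
        (S.map (Ideal.Quotient.mk I).toMonoidHom).comap
          (Ideal.Quotient.mk I).toMonoidHom = S)) ∧
    (∀ T : Submonoid (R ⧸ I), (0 : R ⧸ I) ∉ T →
      ((0 : R) ∉ T.comap (Ideal.Quotient.mk I).toMonoidHom ∧
        (∀ s ∈ T.comap (Ideal.Quotient.mk I).toMonoidHom, ∀ a ∈ I,
          s + a ∈ T.comap (Ideal.Quotient.mk I).toMonoidHom) ∧
        (T.comap (Ideal.Quotient.mk I).toMonoidHom).map
          (Ideal.Quotient.mk I).toMonoidHom = T)) := by
  constructor
  · intro S h0 hcl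
    constructor
    · rintro ⟨s, hs, hs0⟩
      have hsI : s ∈ I := (Ideal.Quotient.eq_zero_iff_mem).mp hs0
      obtain ⟨n, hn⟩ := hI s hsI
      exact h0 (hn ▸ pow_mem hs n)
    · ext x
      simp only [Submonoid.mem_comap, Submonoid.mem_map, RingHom.toMonoidHom_eq_coe,
        RingHom.coe_monoidHom_mk]
      constructor
      · rintro ⟨s, hs, hsx⟩
        have : x - s ∈ I := Ideal.Quotient.eq.mp hsx.symm
        have := hcl s hs _ this
        simpa using this
      · intro hx
        exact ⟨x, hx, rfl⟩
  · intro T h0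
    refine ⟨?_, ?_, ?_⟩
    · intro h
      apply h0
      simpa using h
    · intro s hs a ha
      have : Ideal.Quotient.mk I (s + a) = Ideal.Quotient.mk I s := by
        rw [map_add, Ideal.Quotient.eq_zero_iff_mem.mpr ha, add_zero]
      simpa [Submonoid.mem_comap, this] using hs
    · ext x
      simp only [Submonoid.mem_map, Submonoid.mem_comap]
      constructor
      · rintro ⟨s, hs, rfl⟩
        exact hs
      · intro hx
        obtain ⟨y, rfl⟩ := Ideal.Quotient.mk_surjective x
        exact ⟨y, hx, rfl⟩
end

section
/- Let R be a commutative ring and I a nil ideal. If S is a multiplicative subset of R maximal among multiplicative subsets avoiding 0, then S + I ⊆ S, and π(S) is maximal among multiplicative subsets of R/I avoiding 0. -/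
/-- Let `R` be a commutative ring and `I` a nil ideal. If `S` is a
multiplicative subset of `R` maximal among multiplicative subsets avoiding `0`, then
`S + I ⊆ S`, and `π(S)` is maximal among multiplicative subsets of `R/I` avoiding `0`. -/
theorem stmt7 {R : Type*} [CommRing R] (I : Ideal R) (hI : ∀ a ∈ I, IsNilpotent a)
    (S : Submonoid R) (h0 : (0 : R) ∉ S)
    (hmax : ∀ T : Submonoid R, (0 : R) ∉ T → S ≤ T → T = S) :
    (∀ s ∈ S, ∀ a ∈ I, s + a ∈ S) ∧
      ((0 : R ⧸ I) ∉ S.map (Ideal.Quotient.mk I).toMonoidHom ∧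
        ∀ T : Submonoid (R ⧸ I), (0 : R ⧸ I) ∉ T →
          S.map (Ideal.Quotient.mk I).toMonoidHom ≤ T →
          T = S.map (Ideal.Quotient.mk I).toMonoidHom) := by
  have key : ∀ s ∈ S, ∀ a ∈ I, s + a ∈ S := by
    intro s hs a ha
    -- adjoin s + a to S
    set T : Submonoid R :=
      { carrier := {x | ∃ t ∈ S, ∃ n : ℕ, x = t * (s + a) ^ n}
        one_mem' := ⟨1, S.one_mem, 0, by simp⟩
        mul_mem' := by
          rintro x y ⟨t1, ht1, n1, rfl⟩ ⟨t2, ht2, n2, rfl⟩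
          exact ⟨t1 * t2, S.mul_mem ht1 ht2, n1 + n2, by ring⟩ } with hT
    have hT0 : (0 : R) ∉ T := by
      rintro ⟨t, ht, n, h⟩
      have hdiff : (s + a) ^ n - s ^ n ∈ I := by
        have : Ideal.Quotient.mk I ((s + a) ^ n - s ^ n) = 0 := by
          have : Ideal.Quotient.mk I a = 0 := (Ideal.Quotient.eq_zero_iff_mem).2 ha
          simp [map_sub, map_pow, map_add, this]
        exact (Ideal.Quotient.eq_zero_iff_mem).1 this
      have hts : t * s ^ n ∈ I := by
        have : t * s ^ n = -(t * ((s + a) ^ n - s ^ n)) := by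
          linear_combination -h
        rw [this]
        exact neg_mem (Ideal.mul_mem_left I t hdiff)
      obtain ⟨k, hk⟩ := hI _ hts
      have : (t * s ^ n) ^ k ∈ S := S.pow_mem (S.mul_mem ht (S.pow_mem hs n)) k
      rw [hk] at this
      exact h0 this
    have hST : S ≤ T := fun x hx => ⟨x, hx, 0, by simp⟩
    have : T = S := hmax T hT0 hST
    rw [← this]
    exact ⟨1, S.one_mem, 1, by ring⟩
  refine ⟨key, ?_, ?_⟩
  · rintro ⟨s, hs, h⟩
    have hsI : s ∈ I := (Ideal.Quotient.eq_zero_iff_mem).1 h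
    obtain ⟨k, hk⟩ := hI s hsI
    have : s ^ k ∈ S := S.pow_mem hs k
    rw [hk] at this
    exact h0 this
  · intro T hT0 hle
    set T' : Submonoid R := T.comap (Ideal.Quotient.mk I).toMonoidHom with hT'
    have hT'0 : (0 : R) ∉ T' := by
      intro h
      apply hT0
      have h' : (Ideal.Quotient.mk I) 0 ∈ T := h
      rwa [map_zero] at h'
    have hST' : S ≤ T' := fun x hx => hle ⟨x, hx, rfl⟩
    have heq : T' = S := hmax T' hT'0 hST'
    apply le_antisymm _ hle
    intro x hx
    obtain ⟨r, rfl⟩ := Ideal.Quotient.mk_surjective x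
    have : r ∈ T' := hx
    rw [heq] at this
    exact ⟨r, this, rfl⟩
end

section
/- Let R be a ring whose set C of regular elements is a left Ore set, and suppose the left quotient ring Q = C^{-1}R is left Noetherian. Then the prime radical n of R satisfies n = R ∩ n_Q, where n_Q is the prime radical of Q; in particular n is a nilpotent ideal of R. -/
/-- A (two-sided) prime ideal of a possibly noncommutative ring: a proper two-sided
ideal `P` such that `a R b ⊆ P` implies `a ∈ P` or `b ∈ P`. -/
def IsPrimeTwoSided {R : Type*} [Ring R] (P : Ideal R) : Prop :=
  (∀ a ∈ P, ∀ r : R, a * r ∈ P) ∧ P ≠ ⊤ ∧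
    ∀ a b : R, (∀ r : R, a * r * b ∈ P) → a ∈ P ∨ b ∈ P

/-- The prime radical (intersection of all two-sided prime ideals) of a ring. -/
def primeRadical (R : Type*) [Ring R] : Ideal R :=
  sInf {P : Ideal R | IsPrimeTwoSided P}

/-- An ideal `n` is nilpotent if, for some `k ≥ 1`, every product of `k` elements of
`n` vanishes. -/
def IdealIsNilpotent {R : Type*} [Ring R] (n : Ideal R) : Prop :=
  ∃ k : ℕ, 0 < k ∧ ∀ l : List R, (∀ x ∈ l, x ∈ n) → l.length = k → l.prod = 0

section aux
variable {A : Type*} [Ring A]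

lemma span_mul_mem {S : Set A} {t : A}
    (h : ∀ x ∈ S, x * t ∈ Ideal.span S) :
    ∀ x ∈ Ideal.span S, x * t ∈ Ideal.span S := by
  intro x hx
  refine Submodule.span_induction (p := fun x _ => x * t ∈ Ideal.span S) h ?_ ?_ ?_ hx
  · simp
  · intro a b _ _ ha hb; rw [add_mul]; exact Ideal.add_mem _ ha hb
  · intro a x _ hx'; rw [smul_eq_mul, mul_assoc]; exact Ideal.mul_mem_left _ _ hx'

lemma rspan_mul_closed (a : A) :
    ∀ x ∈ Ideal.span {x : A | ∃ s, x = a * s}, ∀ t : A,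
      x * t ∈ Ideal.span {x : A | ∃ s, x = a * s} := by
  intro x hx t
  refine span_mul_mem ?_ x hx
  rintro y ⟨s, rfl⟩
  exact Ideal.subset_span ⟨s * t, mul_assoc a s t⟩

/-- A two-sided nilpotent ideal is contained in every two-sided prime. -/
lemma nilp_le_prime {I P : Ideal A}
    (hIr : ∀ a ∈ I, ∀ r : A, a * r ∈ I)
    (hP : IsPrimeTwoSided P)
    {k : ℕ} (hk : 0 < k)
    (hnil : ∀ l : List A, (∀ x ∈ l, x ∈ I) → l.length = k → l.prod = 0) :
    I ≤ P := by
  have aux : ∀ j : ℕ,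
      (∀ l : List A, (∀ x ∈ l, x ∈ I) → l.length = j + 1 → l.prod ∈ P) → I ≤ P := by
    intro j
    induction j with
    | zero =>
      intro h x hx
      simpa using h [x] (by simpa using hx) rfl
    | succ j ih =>
      intro h
      by_cases hb : ∃ b ∈ I, b ∉ P
      · obtain ⟨b, hbI, hbP⟩ := hb
        apply ih
        intro l hl hlen
        rcases List.eq_nil_or_concat l with rfl | ⟨L, z, rfl⟩
        · simp at hlen
        have hLlen : L.length = j := by simpa using hlen
        have hzI : z ∈ I := hl z (by simp)
        have hLI : ∀ x ∈ L, x ∈ I := fun x hx => hl x (by simp [List.concat_eq_append, hx])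
        have hkey : ∀ r : A, (L.concat z).prod * r * b ∈ P := by
          intro r
          have hmem : ∀ x ∈ L ++ [z * r, b], x ∈ I := by
            intro x hx
            rcases List.mem_append.1 hx with hx | hx
            · exact hLI x hx
            · simp only [List.mem_cons, List.not_mem_nil, or_false] at hx
              rcases hx with rfl | rfl
              · exact hIr z hzI r
              · exact hbI
          have := h (L ++ [z * r, b]) hmem (by simp [hLlen])
          simpa [List.concat_eq_append, List.prod_append, mul_assoc] using this
        rcases hP.2.2 _ _ hkey with hPP | hPP
        · exact hPP
        · exact absurd hPP hbP
      · push_neg at hb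
        exact fun x hx => hb x hx
  exact aux (k - 1) (by
    intro l hl hlen
    rw [hnil l hl (by omega)]
    exact P.zero_mem)

/-- In a left Noetherian ring, `⊥`-like ideals contain finite products of primes:
every two-sided ideal contains a finite product of two-sided prime ideals. -/
lemma exists_prime_list {Q : Type*} [Ring Q] [IsNoetherianRing Q] (I : Ideal Q)
    (hIr : ∀ a ∈ I, ∀ r : Q, a * r ∈ I) :
    ∃ L : List (Ideal Q), (∀ P ∈ L, IsPrimeTwoSided P) ∧
      ∀ l : List Q, List.Forall₂ (· ∈ ·) l L → l.prod ∈ I := by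
  revert hIr
  refine WellFounded.induction (wellFounded_gt (α := Ideal Q))
    (C := fun I => (∀ a ∈ I, ∀ r : Q, a * r ∈ I) →
      ∃ L : List (Ideal Q), (∀ P ∈ L, IsPrimeTwoSided P) ∧
        ∀ l : List Q, List.Forall₂ (· ∈ ·) l L → l.prod ∈ I) I ?_
  clear I
  intro I IH hIr
  by_cases htop : I = ⊤
  · exact ⟨[], by simp, fun l _ => htop ▸ Submodule.mem_top⟩
  by_cases hpr : IsPrimeTwoSided I
  · refine ⟨[I], by simp [hpr], ?_⟩
    intro l hl
    cases hl with
    | cons hx hl' =>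
      cases hl'
      simpa using hx
  have hnp : ∃ a b : Q, (∀ r : Q, a * r * b ∈ I) ∧ a ∉ I ∧ b ∉ I := by
    by_contra hcon
    push_neg at hcon
    exact hpr ⟨hIr, htop, fun a b hab => by
      by_cases ha : a ∈ I
      · exact Or.inl ha
      · exact Or.inr (hcon a b hab ha)⟩
  obtain ⟨a, b, hab, haI, hbI⟩ := hnp
  set Ia : Ideal Q := Ideal.span {x : Q | ∃ s, x = a * s} with hIa
  set Ib : Ideal Q := Ideal.span {x : Q | ∃ s, x = b * s} with hIb
  have haIa : a ∈ Ia := Ideal.subset_span ⟨1, (mul_one a).symm⟩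
  have hbIb : b ∈ Ib := Ideal.subset_span ⟨1, (mul_one b).symm⟩
  set A := I ⊔ Ia with hA
  set B := I ⊔ Ib with hB
  have hA_r : ∀ x ∈ A, ∀ t : Q, x * t ∈ A := by
    intro x hx t
    rcases Submodule.mem_sup.1 hx with ⟨y, hy, z, hz, rfl⟩
    rw [add_mul]
    exact Submodule.add_mem_sup (hIr y hy t) (rspan_mul_closed a z hz t)
  have hB_r : ∀ x ∈ B, ∀ t : Q, x * t ∈ B := by
    intro x hx t
    rcases Submodule.mem_sup.1 hx with ⟨y, hy, z, hz, rfl⟩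
    rw [add_mul]
    exact Submodule.add_mem_sup (hIr y hy t) (rspan_mul_closed b z hz t)
  have hAgt : A > I := by
    refine lt_of_le_of_ne le_sup_left (fun hEq => haI ?_)
    rw [hEq]
    exact Submodule.mem_sup_right haIa
  have hBgt : B > I := by
    refine lt_of_le_of_ne le_sup_left (fun hEq => hbI ?_)
    rw [hEq]
    exact Submodule.mem_sup_right hbIb
  obtain ⟨LA, hLA, hLAprod⟩ := IH A hAgt hA_r
  obtain ⟨LB, hLB, hLBprod⟩ := IH B hBgt hB_r
  have hIab : ∀ y ∈ Ib, ∀ x ∈ Ia, x * y ∈ I := by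
    intro y hy
    refine Submodule.span_induction (p := fun y _ => ∀ x ∈ Ia, x * y ∈ I) ?_ ?_ ?_ ?_ hy
    · rintro y ⟨t, rfl⟩ x hx
      refine Submodule.span_induction (p := fun x _ => x * (b * t) ∈ I) ?_ ?_ ?_ ?_ hx
      · rintro x ⟨s, rfl⟩
        have := hIr _ (hab s) t
        simpa [mul_assoc] using this
      · simpa using I.zero_mem
      · intro x y _ _ hx hy
        rw [add_mul]
        exact I.add_mem hx hy
      · intro q x _ hx
        rw [smul_eq_mul, mul_assoc]
        exact Ideal.mul_mem_left _ _ hx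
    · intro x _
      simpa using I.zero_mem
    · intro y z _ _ Hy Hz x hx
      rw [mul_add]
      exact I.add_mem (Hy x hx) (Hz x hx)
    · intro q y _ Hy x hx
      rw [smul_eq_mul, ← mul_assoc]
      exact Hy (x * q) (rspan_mul_closed a x hx q)
  have mulAB : ∀ u ∈ A, ∀ v ∈ B, u * v ∈ I := by
    intro u hu v hv
    rcases Submodule.mem_sup.1 hu with ⟨i, hi, x, hx, rfl⟩
    rcases Submodule.mem_sup.1 hv with ⟨i', hi', y, hy, rfl⟩
    have h1 : i * (i' + y) ∈ I := hIr i hi _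
    have h2 : x * i' ∈ I := Ideal.mul_mem_left _ _ hi'
    have h3 : x * y ∈ I := hIab y hy x hx
    have hrw : (i + x) * (i' + y) = i * (i' + y) + (x * i' + x * y) := by noncomm_ring
    rw [hrw]
    exact I.add_mem h1 (I.add_mem h2 h3)
  refine ⟨LA ++ LB, ?_, ?_⟩
  · intro P hP
    rcases List.mem_append.1 hP with hP | hP
    · exact hLA P hP
    · exact hLB P hP
  · intro l hl
    have h1 := List.forall₂_take_append l LA LB hl
    have h2 := List.forall₂_drop_append l LA LB hl
    have hsplit : l = l.take LA.length ++ l.drop LA.length := (List.take_append_drop _ l).symm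
    rw [hsplit, List.prod_append]
    exact mulAB _ (hLAprod _ h1) _ (hLBprod _ h2)

lemma forall₂_of_mem {Q : Type*} [Ring Q] :
    ∀ (L : List (Ideal Q)) (l : List Q), l.length = L.length →
      (∀ x ∈ l, ∀ P ∈ L, x ∈ P) → List.Forall₂ (· ∈ ·) l L := by
  intro L
  induction L with
  | nil =>
    intro l hlen _
    rw [List.length_eq_zero_iff.1 hlen]
    exact List.Forall₂.nil
  | cons P Ltl ih =>
    intro l hlen h
    cases l with
    | nil => simp at hlen
    | cons x t =>
      exact List.Forall₂.cons (h x (by simp) P (by simp))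
        (ih t (by simpa using hlen) (fun y hy P' hP' => h y (by simp [hy]) P' (by simp [hP'])))
end aux

section loc
variable {R : Type*} {Q : Type*} [Ring R] [Ring Q]

def rmulComap (J : Ideal Q) (t : Q) : Ideal Q where
  carrier := {z | z * t ∈ J}
  add_mem' := fun {a b} ha hb => by
    show (a + b) * t ∈ J
    rw [add_mul]; exact J.add_mem ha hb
  zero_mem' := by show (0 : Q) * t ∈ J; rw [zero_mul]; exact J.zero_mem
  smul_mem' := fun q z hz => by
    show (q * z) * t ∈ J
    rw [mul_assoc]; exact Ideal.mul_mem_left _ _ hz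

lemma mem_rmulComap {J : Ideal Q} {t z : Q} : z ∈ rmulComap J t ↔ z * t ∈ J := Iff.rfl

lemma unit_inv_absorb [IsNoetherianRing Q]
    (J : Ideal Q) (u : Qˣ) (hu : ∀ w ∈ J, w * (u : Q) ∈ J) :
    ∀ w ∈ J, w * ((u⁻¹ : Qˣ) : Q) ∈ J := by
  have hmono : Monotone fun k : ℕ => rmulComap J ((u : Q) ^ k) := by
    apply monotone_nat_of_le_succ
    intro k z hz
    rw [mem_rmulComap] at hz ⊢
    rw [pow_succ, ← mul_assoc]
    exact hu _ hz
  obtain ⟨n, hn⟩ := monotone_stabilizes_iff_noetherian.mpr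
    (inferInstance : IsNoetherianRing Q) ⟨_, hmono⟩
  intro w hw
  have hz : w * ((u⁻¹ ^ (n + 1) : Qˣ) : Q) ∈ rmulComap J ((u : Q) ^ (n + 1)) := by
    rw [mem_rmulComap, mul_assoc, ← Units.val_pow_eq_pow_val, ← Units.val_mul]
    have : u⁻¹ ^ (n + 1) * u ^ (n + 1) = 1 := by group
    rw [this, Units.val_one, mul_one]
    exact hw
  have he : rmulComap J ((u : Q) ^ (n + 1)) ≤ rmulComap J ((u : Q) ^ n) := by
    have h1 := hn (n + 1) (Nat.le_succ n)
    exact le_of_eq h1.symm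
  have hz' := he hz
  rw [mem_rmulComap, mul_assoc, ← Units.val_pow_eq_pow_val, ← Units.val_mul] at hz'
  have : u⁻¹ ^ (n + 1) * u ^ n = u⁻¹ := by group
  rwa [this] at hz'

lemma span_image_absorb [IsNoetherianRing Q] (φ : R →+* Q)
    (hunit : ∀ c : R, IsRegular c → IsUnit (φ c))
    (hfrac : ∀ q : Q, ∃ c r : R, IsRegular c ∧ φ c * q = φ r)
    {I : Ideal R} (hIr : ∀ a ∈ I, ∀ r : R, a * r ∈ I) :
    ∀ w ∈ Ideal.span (φ '' (I : Set R)), ∀ q : Q,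
      w * q ∈ Ideal.span (φ '' (I : Set R)) := by
  set J := Ideal.span (φ '' (I : Set R)) with hJdef
  have hR : ∀ r : R, ∀ w ∈ J, w * φ r ∈ J := by
    intro r w hw
    refine span_mul_mem ?_ w hw
    rintro x ⟨i, hi, rfl⟩
    rw [← map_mul]
    exact Ideal.subset_span ⟨i * r, hIr i hi r, rfl⟩
  intro w hw q
  obtain ⟨c, r, hc, hcq⟩ := hfrac q
  set u := (hunit c hc).unit with hu
  have huv : (u : Q) = φ c := (hunit c hc).unit_spec
  have hq : q = ((u⁻¹ : Qˣ) : Q) * φ r := by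
    rw [← hcq, ← huv, ← mul_assoc, Units.inv_mul, one_mul]
  have hwu : w * ((u⁻¹ : Qˣ) : Q) ∈ J :=
    unit_inv_absorb J u (fun w' hw' => huv ▸ hR c w' hw') w hw
  rw [hq, ← mul_assoc]
  exact hR r _ hwu

lemma contraction_prime [IsNoetherianRing Q] (φ : R →+* Q)
    (hunit : ∀ c : R, IsRegular c → IsUnit (φ c))
    (hfrac : ∀ q : Q, ∃ c r : R, IsRegular c ∧ φ c * q = φ r)
    {P : Ideal Q} (hP : IsPrimeTwoSided P) :
    IsPrimeTwoSided (Ideal.comap φ P) := by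
  obtain ⟨hPr, hPt, hPp⟩ := hP
  refine ⟨?_, ?_, ?_⟩
  · intro a ha r
    show φ (a * r) ∈ P
    rw [map_mul]
    exact hPr _ ha _
  · intro h
    apply hPt
    rw [Ideal.eq_top_iff_one] at h ⊢
    simpa using h
  · intro a b h
    set I : Ideal R := Ideal.span {x : R | ∃ s, x = a * s} with hI
    have hIr : ∀ i ∈ I, ∀ r : R, i * r ∈ I := by
      intro i hi r
      exact rspan_mul_closed a i hi r
    have haI : a ∈ I := Ideal.subset_span ⟨1, (mul_one a).symm⟩
    have hIb : ∀ i ∈ I, φ (i * b) ∈ P := by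
      intro i hi
      refine Submodule.span_induction (p := fun i _ => φ (i * b) ∈ P) ?_ ?_ ?_ ?_ hi
      · rintro x ⟨s, rfl⟩
        have := h s
        simpa [mul_assoc] using this
      · simpa using P.zero_mem
      · intro x y _ _ hx hy
        rw [add_mul, map_add]
        exact P.add_mem hx hy
      · intro r x _ hx
        rw [smul_eq_mul, mul_assoc, map_mul]
        exact Ideal.mul_mem_left _ _ hx
    have habs := span_image_absorb φ hunit hfrac hIr
    have hJb : ∀ w ∈ Ideal.span (φ '' (I : Set R)), w * φ b ∈ P := by
      intro w hw
      refine Submodule.span_induction (p := fun w _ => w * φ b ∈ P) ?_ ?_ ?_ ?_ hw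
      · rintro x ⟨i, hi, rfl⟩
        rw [← map_mul]
        exact hIb i hi
      · simpa using P.zero_mem
      · intro x y _ _ hx hy
        rw [add_mul]
        exact P.add_mem hx hy
      · intro q x _ hx
        rw [smul_eq_mul, mul_assoc]
        exact Ideal.mul_mem_left _ _ hx
    have key : ∀ q : Q, φ a * q * φ b ∈ P := fun q =>
      hJb _ (habs _ (Ideal.subset_span ⟨a, haI, rfl⟩) q)
    exact hPp _ _ key
end loc


/-- Let `R` be a ring whose set `C` of regular elements is a left Ore
set, and suppose the left quotient ring `Q = C⁻¹R` (modelled by a ring `Q` and an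
injective ring homomorphism `φ : R → Q` sending regular elements to units, every
element of `Q` being a left fraction) is left Noetherian. Then the prime radical `n` of
`R` satisfies `n = R ∩ n_Q`, where `n_Q` is the prime radical of `Q`; in particular `n`
is a nilpotent ideal of `R`. -/
theorem stmt8 {R Q : Type*} [Ring R] [Ring Q]
    (hOre : ∀ (r c : R), IsRegular c → ∃ c' r' : R, IsRegular c' ∧ c' * r = r' * c)
    (φ : R →+* Q) (hinj : Function.Injective φ)
    (hunit : ∀ c : R, IsRegular c → IsUnit (φ c))
    (hfrac : ∀ q : Q, ∃ c r : R, IsRegular c ∧ φ c * q = φ r)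
    [IsNoetherianRing Q] :
    primeRadical R = Ideal.comap φ (primeRadical Q) ∧
      IdealIsNilpotent (primeRadical R) := by
  classical
  have hnQr : ∀ a ∈ primeRadical Q, ∀ r : Q, a * r ∈ primeRadical Q := by
    intro a ha r
    rw [primeRadical, Submodule.mem_sInf] at ha ⊢
    intro P hP
    exact hP.1 a (ha P hP) r
  obtain ⟨L, hL, hLprod⟩ := exists_prime_list (⊥ : Ideal Q) (by
    intro a ha r
    rw [Submodule.mem_bot] at ha ⊢
    rw [ha, zero_mul])
  set m := L.length with hm
  have hnilQ : ∀ l : List Q, (∀ x ∈ l, x ∈ primeRadical Q) → l.length = m + 1 →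
      l.prod = 0 := by
    intro l hl hlen
    cases l with
    | nil => simp at hlen
    | cons x t =>
      have htL : List.Forall₂ (· ∈ ·) t L := by
        refine forall₂_of_mem L t (by simpa using hlen) ?_
        intro y hy P hP
        have := hl y (by simp [hy])
        rw [primeRadical, Submodule.mem_sInf] at this
        exact this P (hL P hP)
      have h0 : t.prod ∈ (⊥ : Ideal Q) := hLprod t htL
      rw [Submodule.mem_bot] at h0
      rw [List.prod_cons, h0, mul_zero]
  have hsub1 : primeRadical R ≤ Ideal.comap φ (primeRadical Q) := by
    intro x hx
    show φ x ∈ primeRadical Q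
    rw [primeRadical, Submodule.mem_sInf]
    intro P hP
    have hc : IsPrimeTwoSided (Ideal.comap φ P) := contraction_prime φ hunit hfrac hP
    rw [primeRadical, Submodule.mem_sInf] at hx
    exact hx (Ideal.comap φ P) hc
  have hcom_r : ∀ a ∈ Ideal.comap φ (primeRadical Q), ∀ r : R,
      a * r ∈ Ideal.comap φ (primeRadical Q) := by
    intro a ha r
    show φ (a * r) ∈ primeRadical Q
    rw [map_mul]
    exact hnQr _ ha _
  have hnil_com : ∀ l : List R, (∀ x ∈ l, x ∈ Ideal.comap φ (primeRadical Q)) →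
      l.length = m + 1 → l.prod = 0 := by
    intro l hl hlen
    apply hinj
    rw [map_zero, map_list_prod]
    refine hnilQ (l.map φ) ?_ (by simp [hlen])
    intro y hy
    rcases List.mem_map.1 hy with ⟨x, hx, rfl⟩
    exact hl x hx
  have hsub2 : Ideal.comap φ (primeRadical Q) ≤ primeRadical R := by
    rw [primeRadical]
    refine le_sInf ?_
    intro P hP
    exact nilp_le_prime hcom_r hP (Nat.succ_pos m) hnil_com
  have heq : primeRadical R = Ideal.comap φ (primeRadical Q) := le_antisymm hsub1 hsub2
  refine ⟨heq, m + 1, Nat.succ_pos m, ?_⟩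
  intro l hl hlen
  have : ∀ x ∈ l, x ∈ Ideal.comap φ (primeRadical Q) := fun x hx => heq ▸ hl x hx
  exact hnil_com l this hlen
end

section
/- Let R be a ring whose regular elements C form a left Ore set with Q = C^{-1}R left Noetherian, and let n be the prime radical of R. Then C + n ⊆ C, i.e., c + a is a regular element of R whenever c is regular and a ∈ n. -/
/-- The span of `{s * x * t}` is right-closed. -/
lemma span_sandwich_right_closed {S : Type*} [Ring S] (x : S) :
    ∀ z ∈ Ideal.span {z : S | ∃ s t : S, s * x * t = z}, ∀ r : S,
      z * r ∈ Ideal.span {z : S | ∃ s t : S, s * x * t = z} := by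
  intro z hz
  induction hz using Submodule.span_induction with
  | mem w hw =>
      obtain ⟨s, t, rfl⟩ := hw
      intro r
      exact Ideal.subset_span ⟨s, t * r, by simp [mul_assoc]⟩
  | zero => intro r; simp
  | add w₁ w₂ h1 h2 ih1 ih2 => intro r; rw [add_mul]; exact Ideal.add_mem _ (ih1 r) (ih2 r)
  | smul a w hw ih =>
      intro r
      rw [smul_eq_mul, mul_assoc]
      exact Ideal.mul_mem_left _ a (ih r)

lemma nilpotent_of_mem_primeRadical {S : Type*} [Ring S] {b : S}
    (hb : b ∈ primeRadical S) : ∃ n : ℕ, b ^ (n + 1) = 0 := by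
  by_contra hnil
  push_neg at hnil
  -- the Zorn family : two-sided "ideals" (as sets) avoiding all powers of b
  set F : Set (Set S) := {T | (0 : S) ∈ T ∧ (∀ p ∈ T, ∀ q ∈ T, p + q ∈ T) ∧
      (∀ p ∈ T, ∀ r : S, r * p ∈ T) ∧ (∀ p ∈ T, ∀ r : S, p * r ∈ T) ∧
      ∀ n : ℕ, b ^ (n + 1) ∉ T} with hF
  have h0 : ({0} : Set S) ∈ F := by
    refine ⟨rfl, ?_, ?_, ?_, ?_⟩ <;> simp_all
  have hchains : ∀ c ⊆ F, IsChain (· ⊆ ·) c → c.Nonempty →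
      ∃ ub ∈ F, ∀ s ∈ c, s ⊆ ub := by
    intro c hcF hchain hcne
    refine ⟨⋃₀ c, ⟨?_, ?_, ?_, ?_, ?_⟩, fun s hs => Set.subset_sUnion_of_mem hs⟩
    · obtain ⟨T, hT⟩ := hcne
      exact Set.mem_sUnion.mpr ⟨T, hT, (hcF hT).1⟩
    · rintro p ⟨T₁, hT₁, hp⟩ q ⟨T₂, hT₂, hq⟩
      rcases hchain.total hT₁ hT₂ with h | h
      · exact ⟨T₂, hT₂, (hcF hT₂).2.1 _ (h hp) _ hq⟩
      · exact ⟨T₁, hT₁, (hcF hT₁).2.1 _ hp _ (h hq)⟩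
    · rintro p ⟨T, hT, hp⟩ r
      exact ⟨T, hT, (hcF hT).2.2.1 _ hp r⟩
    · rintro p ⟨T, hT, hp⟩ r
      exact ⟨T, hT, (hcF hT).2.2.2.1 _ hp r⟩
    · rintro n ⟨T, hT, hp⟩
      exact (hcF hT).2.2.2.2 n hp
  obtain ⟨M, -, hM⟩ := zorn_subset_nonempty F hchains {0} h0
  -- build the ideal
  have hMF : M ∈ F := hM.prop
  have hneg : ∀ p ∈ M, -p ∈ M := by
    intro p hp
    have := hMF.2.2.1 p hp (-1)
    simpa using this
  set P : Ideal S :=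
    { carrier := M
      zero_mem' := hMF.1
      add_mem' := fun hp hq => hMF.2.1 _ hp _ hq
      smul_mem' := fun r x hx => by
        simpa [smul_eq_mul] using hMF.2.2.1 _ hx r } with hP
  have hmemP : ∀ z : S, z ∈ P ↔ z ∈ M := fun z => Iff.rfl
  -- P is prime
  have hprime : IsPrimeTwoSided P := by
    refine ⟨fun p hp r => hMF.2.2.2.1 p hp r, ?_, ?_⟩
    · intro htop
      exact hMF.2.2.2.2 0 (by simpa using (hmemP _).mp (htop ▸ Submodule.mem_top : b ^ 1 ∈ P))
    · intro x y hxy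
      by_contra hcon
      push_neg at hcon
      obtain ⟨hx, hy⟩ := hcon
      -- enlarge by the two-sided ideal generated by x (resp. y)
      have key : ∀ w : S, w ∉ M → ∃ i : ℕ,
          b ^ (i + 1) ∈ P ⊔ Ideal.span {z : S | ∃ s t : S, s * w * t = z} := by
        intro w hw
        set J : Ideal S := P ⊔ Ideal.span {z : S | ∃ s t : S, s * w * t = z} with hJ
        by_contra hnone
        push_neg at hnone
        have hJF : (J : Set S) ∈ F := by
          refine ⟨J.zero_mem, fun p hp q hq => J.add_mem hp hq,
            fun p hp r => J.mul_mem_left r hp, ?_, hnone⟩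
          intro p hp r
          obtain ⟨m, hm, ξ, hξ, rfl⟩ := Submodule.mem_sup.mp hp
          rw [add_mul]
          exact J.add_mem
            (Submodule.mem_sup_left (hMF.2.2.2.1 _ hm r))
            (Submodule.mem_sup_right (span_sandwich_right_closed w _ hξ r))
        have hsub : M ⊆ (J : Set S) := fun z hz => Submodule.mem_sup_left hz
        have := hM.2 hJF hsub
        exact hw (this (Submodule.mem_sup_right
          (Ideal.subset_span ⟨1, 1, by simp⟩)))
      obtain ⟨i, hi⟩ := key x hx
      obtain ⟨j, hj⟩ := key y hy
      -- the product of the two powers lies in M, contradiction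
      obtain ⟨m, hm, ξ, hξ, hdi⟩ := Submodule.mem_sup.mp hi
      obtain ⟨m', hm', η, hη, hdj⟩ := Submodule.mem_sup.mp hj
      have hinner : ∀ η' ∈ Ideal.span {z : S | ∃ s t : S, s * y * t = z},
          ∀ s t : S, s * x * t * η' ∈ M := by
        intro η' hη'
        induction hη' using Submodule.span_induction with
        | mem w hw =>
            obtain ⟨s', t', rfl⟩ := hw
            intro s t
            have h1 : x * (t * s') * y ∈ M := hxy (t * s')
            have h2 : s * (x * (t * s') * y) ∈ M := hMF.2.2.1 _ h1 s
            have h3 : s * (x * (t * s') * y) * t' ∈ M := hMF.2.2.2.1 _ h2 t'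
            have heq : s * x * t * (s' * y * t') = s * (x * (t * s') * y) * t' := by
              simp [mul_assoc]
            rw [heq]; exact h3
        | zero => intro s t; simpa using hMF.1
        | add w₁ w₂ h1 h2 ih1 ih2 =>
            intro s t
            rw [mul_add]
            exact hMF.2.1 _ (ih1 s t) _ (ih2 s t)
        | smul a w hw ih =>
            intro s t
            have heq : s * x * t * (a • w) = s * x * (t * a) * w := by
              simp [smul_eq_mul, mul_assoc]
            rw [heq]; exact ih s (t * a)
      have hxieta : ξ * η ∈ M := by
        clear hdi hi
        induction hξ using Submodule.span_induction with
        | mem w hw =>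
            obtain ⟨s, t, rfl⟩ := hw
            exact hinner η hη s t
        | zero => simpa using hMF.1
        | add w₁ w₂ h1 h2 ih1 ih2 => rw [add_mul]; exact hMF.2.1 _ ih1 _ ih2
        | smul a w hw ih =>
            rw [smul_eq_mul, mul_assoc]
            exact hMF.2.2.1 _ ih a
      have hprod : b ^ (i + 1) * b ^ (j + 1) ∈ M := by
        rw [← hdi, ← hdj]
        have h1 : m * m' ∈ M := hMF.2.2.2.1 _ hm m'
        have h2 : m * η ∈ M := hMF.2.2.2.1 _ hm η
        have h3 : ξ * m' ∈ M := hMF.2.2.1 _ hm' ξ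
        have : (m + ξ) * (m' + η) = m * m' + m * η + ξ * m' + ξ * η := by noncomm_ring
        rw [this]
        exact hMF.2.1 _ (hMF.2.1 _ (hMF.2.1 _ h1 _ h2) _ h3) _ hxieta
      have : b ^ ((i + j + 1) + 1) ∈ M := by
        have : b ^ (i + 1) * b ^ (j + 1) = b ^ ((i + j + 1) + 1) := by
          rw [← pow_add]; ring_nf
        rwa [this] at hprod
      exact hMF.2.2.2.2 _ this
  -- conclude
  have hble : primeRadical S ≤ P := sInf_le hprime
  have : b ∈ M := hble hb
  exact hMF.2.2.2.2 0 (by simpa using this)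


section Loc
variable {R Q : Type*} [Ring R] [Ring Q] (φ : R →+* Q)

/-- The left ideal of `Q` generated by the image of `I`. -/
noncomputable def extIdeal (I : Ideal R) : Ideal Q := Ideal.span (φ '' I)

lemma extIdeal_mul_φ (I : Ideal R) (hIr : ∀ x ∈ I, ∀ r : R, x * r ∈ I) :
    ∀ z ∈ extIdeal φ I, ∀ r : R, z * φ r ∈ extIdeal φ I := by
  intro z hz
  induction hz using Submodule.span_induction with
  | mem w hw =>
      obtain ⟨b, hb, rfl⟩ := hw
      intro r
      exact Ideal.subset_span ⟨b * r, hIr b hb r, map_mul φ b r⟩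
  | zero => intro r; simp
  | add w₁ w₂ h1 h2 ih1 ih2 => intro r; rw [add_mul]; exact Ideal.add_mem _ (ih1 r) (ih2 r)
  | smul a w hw ih =>
      intro r
      rw [smul_eq_mul, mul_assoc]
      exact Ideal.mul_mem_left _ a (ih r)

lemma extIdeal_mul_inv [IsNoetherianRing Q] (I : Ideal R)
    (hIr : ∀ x ∈ I, ∀ r : R, x * r ∈ I)
    {c : R} (u : Qˣ) (hu : (u : Q) = φ c) :
    ∀ b ∈ I, φ b * (↑u⁻¹ : Q) ∈ extIdeal φ I := by
  intro b hb
  -- ascending chain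
  set f : ℕ →o Ideal Q :=
    ⟨fun n => Ideal.span {z : Q | ∃ b' ∈ I, ∃ k ≤ n, φ b' * (↑u⁻¹ : Q) ^ k = z}, by
      intro n m hnm
      exact Ideal.span_mono (fun z ⟨b', hb', k, hk, hz⟩ => ⟨b', hb', k, hk.trans hnm, hz⟩)⟩
    with hf
  obtain ⟨n, hn⟩ := monotone_stabilizes_iff_noetherian.mpr
    (inferInstance : IsNoetherian Q Q) f
  have hmem : φ b * (↑u⁻¹ : Q) ^ (n + 1) ∈ f n := by
    rw [hn (n + 1) (Nat.le_succ n)]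
    exact Ideal.subset_span ⟨b, hb, n + 1, le_refl _, rfl⟩
  have hcancel : ∀ k : ℕ, (↑u⁻¹ : Q) ^ k * (↑u : Q) ^ k = 1 := by
    intro k
    rw [← Units.val_pow_eq_pow_val, ← Units.val_pow_eq_pow_val, ← Units.val_mul,
      inv_pow, inv_mul_cancel, Units.val_one]
  have hIc : ∀ b' ∈ I, ∀ m : ℕ, b' * c ^ m ∈ I := by
    intro b' hb' m
    induction m with
    | zero => simpa using hb'
    | succ m ih =>
        have : b' * c ^ (m + 1) = (b' * c ^ m) * c := by rw [pow_succ, mul_assoc]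
        rw [this]; exact hIr _ ih c
  -- multiply by u^n on the right
  have hkey : ∀ z ∈ f n, z * (↑u : Q) ^ n ∈ extIdeal φ I := by
    intro z hz
    induction hz using Submodule.span_induction with
    | mem w hw =>
        obtain ⟨b', hb', k, hk, rfl⟩ := hw
        have heq : φ b' * (↑u⁻¹ : Q) ^ k * (↑u : Q) ^ n = φ (b' * c ^ (n - k)) := by
          have hnk : n = k + (n - k) := (Nat.add_sub_cancel' hk).symm
          calc φ b' * (↑u⁻¹ : Q) ^ k * (↑u : Q) ^ n
              = φ b' * ((↑u⁻¹ : Q) ^ k * ((↑u : Q) ^ k * (↑u : Q) ^ (n - k))) := by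
                rw [mul_assoc]; rw [← pow_add]; rw [← hnk]
            _ = φ b' * (((↑u⁻¹ : Q) ^ k * (↑u : Q) ^ k) * (↑u : Q) ^ (n - k)) := by
                rw [mul_assoc]
            _ = φ b' * (↑u : Q) ^ (n - k) := by rw [hcancel k, one_mul]
            _ = φ b' * (φ c) ^ (n - k) := by rw [hu]
            _ = φ (b' * c ^ (n - k)) := by rw [map_mul, map_pow]
        rw [heq]
        exact Ideal.subset_span ⟨b' * c ^ (n - k), hIc b' hb' _, rfl⟩
    | zero => simp
    | add w₁ w₂ h1 h2 ih1 ih2 => rw [add_mul]; exact Ideal.add_mem _ ih1 ih2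
    | smul a w hw ih =>
        rw [smul_eq_mul, mul_assoc]
        exact Ideal.mul_mem_left _ a ih
  have := hkey _ hmem
  have heq : φ b * (↑u⁻¹ : Q) ^ (n + 1) * (↑u : Q) ^ n = φ b * (↑u⁻¹ : Q) := by
    calc φ b * (↑u⁻¹ : Q) ^ (n + 1) * (↑u : Q) ^ n
        = φ b * ((↑u⁻¹ : Q) * ((↑u⁻¹ : Q) ^ n * (↑u : Q) ^ n)) := by
          rw [pow_succ' (↑u⁻¹ : Q) n, mul_assoc, mul_assoc]
      _ = φ b * (↑u⁻¹ : Q) := by rw [hcancel n, mul_one]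
  rwa [heq] at this

lemma extIdeal_mul_mem [IsNoetherianRing Q]
    (hunit : ∀ c : R, IsRegular c → IsUnit (φ c))
    (hfrac : ∀ q : Q, ∃ c r : R, IsRegular c ∧ φ c * q = φ r)
    (I : Ideal R) (hIr : ∀ x ∈ I, ∀ r : R, x * r ∈ I) :
    ∀ z ∈ extIdeal φ I, ∀ q : Q, z * q ∈ extIdeal φ I := by
  have hbase : ∀ b ∈ I, ∀ q : Q, φ b * q ∈ extIdeal φ I := by
    intro b hb q
    obtain ⟨c, r, hc, hcq⟩ := hfrac q
    set u := (hunit c hc).unit with hudef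
    have hu : (u : Q) = φ c := (hunit c hc).unit_spec
    have hq : q = (↑u⁻¹ : Q) * φ r := by
      have : (↑u⁻¹ : Q) * ((u : Q) * q) = (↑u⁻¹ : Q) * φ r := by rw [hu, hcq]
      rwa [← mul_assoc, Units.inv_mul, one_mul] at this
    rw [hq, ← mul_assoc]
    exact extIdeal_mul_φ φ I hIr _ (extIdeal_mul_inv φ I hIr u hu b hb) r
  intro z hz
  induction hz using Submodule.span_induction with
  | mem w hw =>
      obtain ⟨b, hb, rfl⟩ := hw
      exact hbase b hb
  | zero => intro q; simp
  | add w₁ w₂ h1 h2 ih1 ih2 => intro q; rw [add_mul]; exact Ideal.add_mem _ (ih1 q) (ih2 q)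
  | smul a w hw ih =>
      intro q
      rw [smul_eq_mul, mul_assoc]
      exact Ideal.mul_mem_left _ a (ih q)

end Loc


section Contraction
variable {R Q : Type*} [Ring R] [Ring Q] (φ : R →+* Q)


lemma comapPrimeTwoSided [IsNoetherianRing Q]
    (hunit : ∀ c : R, IsRegular c → IsUnit (φ c))
    (hfrac : ∀ q : Q, ∃ c r : R, IsRegular c ∧ φ c * q = φ r)
    (P : Ideal Q) (hP : IsPrimeTwoSided P) :
    IsPrimeTwoSided (Ideal.comap φ P) := by
  refine ⟨?_, ?_, ?_⟩
  · intro z hz r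
    rw [Ideal.mem_comap] at *
    rw [map_mul]
    exact hP.1 _ hz (φ r)
  · intro htop
    have h1 : (1 : R) ∈ Ideal.comap φ P := htop ▸ Submodule.mem_top
    rw [Ideal.mem_comap, map_one] at h1
    exact hP.2.1 (Ideal.eq_top_iff_one P |>.mpr h1)
  · intro x y hxy
    set Gx : Set R := {z : R | ∃ s t : R, s * x * t = z} with hGx
    set I : Ideal R := Ideal.span Gx with hI
    have hIr : ∀ z ∈ I, ∀ r : R, z * r ∈ I := span_sandwich_right_closed x
    have hxI : x ∈ I := Ideal.subset_span ⟨1, 1, by simp⟩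
    have hq : ∀ q : Q, φ x * q * φ y ∈ P := by
      intro q
      have h1 : φ x * q ∈ extIdeal φ I :=
        extIdeal_mul_mem φ hunit hfrac I hIr _ (Ideal.subset_span ⟨x, hxI, rfl⟩) q
      -- now multiply by φ y on the right and land in P
      have h2 : ∀ z ∈ extIdeal φ I, z * φ y ∈ P := by
        intro z hz
        induction hz using Submodule.span_induction with
        | mem w hw =>
            obtain ⟨b, hb, rfl⟩ := hw
            rw [← map_mul]
            -- b * y ∈ comap φ P
            have hby : ∀ b' ∈ I, b' * y ∈ Ideal.comap φ P := by
              intro b' hb'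
              induction hb' using Submodule.span_induction with
              | mem w' hw' =>
                  obtain ⟨s, t, rfl⟩ := hw'
                  have h3 : x * t * y ∈ Ideal.comap φ P := hxy t
                  have h4 : s * (x * t * y) ∈ Ideal.comap φ P :=
                    Ideal.mul_mem_left _ s h3
                  have heq : s * x * t * y = s * (x * t * y) := by
                    simp [mul_assoc]
                  rw [heq]; exact h4
              | zero => simp
              | add w₁ w₂ hw1 hw2 ih1 ih2 => rw [add_mul]; exact Ideal.add_mem _ ih1 ih2
              | smul a w' hw' ih =>
                  rw [smul_eq_mul, mul_assoc]
                  exact Ideal.mul_mem_left _ a ih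
            exact Ideal.mem_comap.mp (hby b hb)
        | zero => simp
        | add w₁ w₂ hw1 hw2 ih1 ih2 => rw [add_mul]; exact Ideal.add_mem _ ih1 ih2
        | smul a w hw ih =>
            rw [smul_eq_mul, mul_assoc]
            exact Ideal.mul_mem_left _ a ih
      exact h2 _ h1
    rcases hP.2.2 (φ x) (φ y) hq with h | h
    · exact Or.inl (Ideal.mem_comap.mpr h)
    · exact Or.inr (Ideal.mem_comap.mpr h)

end Contraction

/-- Let `R` be a ring whose regular elements `C` form a left Ore set
with `Q = C⁻¹R` left Noetherian, and let `n` be the prime radical of `R`. Then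
`C + n ⊆ C`, i.e. `c + a` is a regular element of `R` whenever `c` is regular and
`a ∈ n`. -/
theorem stmt9 {R Q : Type*} [Ring R] [Ring Q]
    (hOre : ∀ (r c : R), IsRegular c → ∃ c' r' : R, IsRegular c' ∧ c' * r = r' * c)
    (φ : R →+* Q) (hinj : Function.Injective φ)
    (hunit : ∀ c : R, IsRegular c → IsUnit (φ c))
    (hfrac : ∀ q : Q, ∃ c r : R, IsRegular c ∧ φ c * q = φ r)
    [IsNoetherianRing Q] :
    ∀ (c a : R), IsRegular c → a ∈ primeRadical R → IsRegular (c + a) := by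
  intro c a hc ha
  set u := (hunit c hc).unit with hudef
  have hu : (u : Q) = φ c := (hunit c hc).unit_spec
  -- φ a belongs to the prime radical of Q
  have hφa : φ a ∈ primeRadical Q := by
    rw [primeRadical, Ideal.mem_sInf]
    intro P hP
    have hcp : IsPrimeTwoSided (Ideal.comap φ P) := comapPrimeTwoSided φ hunit hfrac P hP
    have : primeRadical R ≤ Ideal.comap φ P := sInf_le hcp
    exact Ideal.mem_comap.mp (this ha)
  set x : Q := (↑u⁻¹ : Q) * φ a with hxdef
  have hx : x ∈ primeRadical Q := Ideal.mul_mem_left _ _ hφa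
  obtain ⟨n, hn⟩ := nilpotent_of_mem_primeRadical hx
  have hone : IsUnit (1 + x) := IsNilpotent.isUnit_one_add ⟨n + 1, hn⟩
  have hsum : φ (c + a) = (↑u : Q) * (1 + x) := by
    rw [map_add, mul_add, mul_one, hxdef, ← mul_assoc, Units.mul_inv, one_mul, hu]
  have hunit_sum : IsUnit (φ (c + a)) := by
    rw [hsum]; exact u.isUnit.mul hone
  constructor
  · intro z w h
    apply hinj
    have h2 : φ (c + a) * φ z = φ (c + a) * φ w := by
      rw [← map_mul, ← map_mul]
      exact congrArg φ h
    exact hunit_sum.mul_left_cancel h2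
  · intro z w h
    apply hinj
    have h2 : φ z * φ (c + a) = φ w * φ (c + a) := by
      rw [← map_mul, ← map_mul]
      exact congrArg φ h
    exact hunit_sum.mul_right_cancel h2
end

section
/- Let R be a ring and S, T submonoids of the multiplicative monoid of R that are both left Ore sets. If the submonoid ST generated by S and T does not contain 0, then ST is a left Ore set of R. -/
/-- Let `R` be a ring and `S, T` submonoids of the multiplicative
monoid of `R` that are both left Ore sets. If the submonoid `ST` generated by `S` and
`T` does not contain `0`, then `ST` is a left Ore set of `R`. -/
theorem stmt11 {R : Type*} [Ring R] (S T : Submonoid R)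
    (h0S : (0 : R) ∉ S) (h0T : (0 : R) ∉ T)
    (hOreS : ∀ (r : R), ∀ s ∈ S, ∃ s' ∈ S, ∃ r' : R, s' * r = r' * s)
    (hOreT : ∀ (r : R), ∀ s ∈ T, ∃ s' ∈ T, ∃ r' : R, s' * r = r' * s)
    (h0 : (0 : R) ∉ (S ⊔ T : Submonoid R)) :
    ∀ (r : R), ∀ s ∈ (S ⊔ T : Submonoid R),
      ∃ s' ∈ (S ⊔ T : Submonoid R), ∃ r' : R, s' * r = r' * s := by
  have key : ∀ s ∈ (S ⊔ T : Submonoid R), ∀ r : R,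
      ∃ s' ∈ (S ⊔ T : Submonoid R), ∃ r' : R, s' * r = r' * s := by
    intro s hs
    rw [Submonoid.sup_eq_closure] at hs
    induction hs using Submonoid.closure_induction with
    | mem x hx =>
      intro r
      rcases hx with hx | hx
      · obtain ⟨s', hs', r', h⟩ := hOreS r x hx
        exact ⟨s', Submonoid.mem_sup_left hs', r', h⟩
      · obtain ⟨s', hs', r', h⟩ := hOreT r x hx
        exact ⟨s', Submonoid.mem_sup_right hs', r', h⟩
    | one => exact fun r => ⟨1, one_mem _, r, by rw [one_mul, mul_one]⟩
    | mul a b _ _ ha hb =>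
      intro r
      obtain ⟨s₁, hs₁, r₁, h₁⟩ := hb r
      obtain ⟨s₂, hs₂, r₂, h₂⟩ := ha r₁
      exact ⟨s₂ * s₁, mul_mem hs₂ hs₁, r₂, by
        rw [mul_assoc, h₁, ← mul_assoc, h₂, mul_assoc]⟩
  exact fun r s hs => key s hs r
end

section
/- Let R be a ring and S, T left denominator sets of R. If the multiplicative submonoid ST generated by S and T does not contain 0, then ST is a left denominator set of R. -/
/-- Let `R` be a ring and `S, T` left denominator sets of `R`. If the
multiplicative submonoid `ST` generated by `S` and `T` does not contain `0`, then `ST`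
is a left denominator set of `R`. -/
theorem stmt12 {R : Type*} [Ring R] (S T : Submonoid R)
    (h0S : (0 : R) ∉ S) (h0T : (0 : R) ∉ T)
    (hOreS : ∀ (r : R), ∀ s ∈ S, ∃ s' ∈ S, ∃ r' : R, s' * r = r' * s)
    (hOreT : ∀ (r : R), ∀ s ∈ T, ∃ s' ∈ T, ∃ r' : R, s' * r = r' * s)
    (hdenS : ∀ (r : R), ∀ s ∈ S, r * s = 0 → ∃ t ∈ S, t * r = 0)
    (hdenT : ∀ (r : R), ∀ s ∈ T, r * s = 0 → ∃ t ∈ T, t * r = 0)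
    (h0 : (0 : R) ∉ (S ⊔ T : Submonoid R)) :
    (∀ (r : R), ∀ s ∈ (S ⊔ T : Submonoid R),
      ∃ s' ∈ (S ⊔ T : Submonoid R), ∃ r' : R, s' * r = r' * s) ∧
    (∀ (r : R), ∀ s ∈ (S ⊔ T : Submonoid R), r * s = 0 →
      ∃ t ∈ (S ⊔ T : Submonoid R), t * r = 0) := by
  have key : ∀ s ∈ (S ⊔ T : Submonoid R),
      (∀ r : R, ∃ s' ∈ (S ⊔ T : Submonoid R), ∃ r' : R, s' * r = r' * s) ∧
      (∀ r : R, r * s = 0 → ∃ t ∈ (S ⊔ T : Submonoid R), t * r = 0) := by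
    intro s hs
    have hs' : s ∈ Submonoid.closure ((S : Set R) ∪ T) := by
      rwa [Submonoid.closure_union, Submonoid.closure_eq, Submonoid.closure_eq]
    clear hs
    induction hs' using Submonoid.closure_induction with
    | mem x hx =>
      rcases hx with hx | hx
      · refine ⟨fun r => ?_, fun r hr => ?_⟩
        · obtain ⟨s', hsm, r', h⟩ := hOreS r x hx
          exact ⟨s', Submonoid.mem_sup_left hsm, r', h⟩
        · obtain ⟨t, htm, h⟩ := hdenS r x hx hr
          exact ⟨t, Submonoid.mem_sup_left htm, h⟩
      · refine ⟨fun r => ?_, fun r hr => ?_⟩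
        · obtain ⟨s', hsm, r', h⟩ := hOreT r x hx
          exact ⟨s', Submonoid.mem_sup_right hsm, r', h⟩
        · obtain ⟨t, htm, h⟩ := hdenT r x hx hr
          exact ⟨t, Submonoid.mem_sup_right htm, h⟩
    | one =>
      exact ⟨fun r => ⟨1, one_mem _, r, by rw [one_mul, mul_one]⟩,
        fun r hr => ⟨1, one_mem _, by simpa using hr⟩⟩
    | mul a b ha hb iha ihb =>
      refine ⟨fun r => ?_, fun r hr => ?_⟩
      · obtain ⟨s₁, hs₁, r₁, h₁⟩ := ihb.1 r
        obtain ⟨s₂, hs₂, r₂, h₂⟩ := iha.1 r₁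
        refine ⟨s₂ * s₁, mul_mem hs₂ hs₁, r₂, ?_⟩
        calc s₂ * s₁ * r = s₂ * (r₁ * b) := by rw [mul_assoc, h₁]
          _ = (s₂ * r₁) * b := by rw [mul_assoc]
          _ = r₂ * a * b := by rw [h₂]
          _ = r₂ * (a * b) := by rw [mul_assoc]
      · have hrab : (r * a) * b = 0 := by rwa [mul_assoc]
        obtain ⟨t₁, ht₁, h₁⟩ := ihb.2 (r * a) hrab
        have h₁' : (t₁ * r) * a = 0 := by rwa [mul_assoc]
        obtain ⟨t₂, ht₂, h₂⟩ := iha.2 (t₁ * r) h₁'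
        exact ⟨t₂ * t₁, mul_mem ht₂ ht₁, by rwa [mul_assoc]⟩
  exact ⟨fun r s hs => (key s hs).1 r, fun r s hs => (key s hs).2 r⟩
end

section
/- Let G be a monoid with identity e, A = ⊕_{g∈G} A_g a G-graded ring with 1 ∈ A_e, and S a left denominator set of A with S ⊆ A_e. Then the kernel ideal ass(S) = {a ∈ A | sa = 0 for some s ∈ S} is a G-graded (homogeneous) ideal of A. -/
lemma aux13 {ι A : Type*} [AddMonoid ι] [DecidableEq ι] [Ring A]
    (𝒜 : ι → AddSubgroup A) [GradedRing 𝒜] {s : A} (hs : s ∈ 𝒜 0) (a : A) (i : ι) :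
    (DirectSum.decompose 𝒜 (s * a) i : A) = s * (DirectSum.decompose 𝒜 a i : A) := by
  induction a using DirectSum.Decomposition.inductionOn 𝒜 with
  | zero => simp
  | homogeneous x =>
      rename_i j
      have hsx : s * x ∈ 𝒜 j := by
        simpa using SetLike.GradedMul.mul_mem (A := 𝒜) hs x.2
      by_cases hij : i = j
      · subst hij
        rw [DirectSum.decompose_of_mem_same 𝒜 hsx,
          DirectSum.decompose_of_mem_same 𝒜 x.2]
      · rw [DirectSum.decompose_of_mem_ne 𝒜 hsx (Ne.symm hij),
          DirectSum.decompose_of_mem_ne 𝒜 x.2 (Ne.symm hij), mul_zero]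
  | add x y hx hy =>
      simp only [mul_add, DirectSum.decompose_add, DirectSum.add_apply,
        AddSubgroup.coe_add, hx, hy]

/-- Let `G` be a monoid (written additively, with identity `0`),
`A = ⊕_{g ∈ G} A_g` a `G`-graded ring with `1 ∈ A_0`, and `S` a left denominator set of
`A` with `S ⊆ A_0`. Then the kernel ideal `ass(S) = {a ∈ A | s * a = 0 for some s ∈ S}`
is a `G`-graded (homogeneous) ideal of `A`: together with any element it contains all
its homogeneous components. -/
theorem stmt13 {ι A : Type*} [AddMonoid ι] [DecidableEq ι] [Ring A]
    (𝒜 : ι → AddSubgroup A) [GradedRing 𝒜] (S : Submonoid A)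
    (hS0 : ∀ s ∈ S, s ∈ 𝒜 0)
    (hOre : ∀ (r : A), ∀ s ∈ S, ∃ s' ∈ S, ∃ r' : A, s' * r = r' * s)
    (hden : ∀ (r : A), ∀ s ∈ S, r * s = 0 → ∃ t ∈ S, t * r = 0) :
    ∀ a : A, (∃ s ∈ S, s * a = 0) →
      ∀ i : ι, ∃ s ∈ S, s * (DirectSum.decompose 𝒜 a i : A) = 0 := by
  rintro a ⟨s, hsS, hsa⟩ i
  refine ⟨s, hsS, ?_⟩
  rw [← aux13 𝒜 (hS0 s hsS) a i, hsa]
  simp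
end

section
/- Let R be a ring, S a left denominator set of R, and suppose: (i) the localization S^{-1}R is left Noetherian, and (ii) for every left ideal I of R, the S-torsion submodule of R/I is a Noetherian left R-module. Then R is left Noetherian. -/
/-- Let `R` be a ring, `S` a left denominator set of `R`, and suppose:
(i) the localization `S⁻¹R` (modelled by a ring `Q'` and a homomorphism `φ : R → Q'`
sending `S` to units, with kernel the `S`-torsion of `R` and with every element of `Q'`
a left fraction) is left Noetherian, and (ii) for every left ideal `I` of `R` the
`S`-torsion submodule of `R/I` is a Noetherian left `R`-module (equivalently, every
submodule of `R/I` consisting of `S`-torsion elements is finitely generated). Then `R`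
is left Noetherian. -/
theorem stmt14 {R Q' : Type*} [Ring R] [Ring Q'] (S : Submonoid R)
    (h0 : (0 : R) ∉ S)
    (hOre : ∀ (r : R), ∀ s ∈ S, ∃ s' ∈ S, ∃ r' : R, s' * r = r' * s)
    (hden : ∀ (r : R), ∀ s ∈ S, r * s = 0 → ∃ t ∈ S, t * r = 0)
    (φ : R →+* Q')
    (hker : ∀ r : R, φ r = 0 ↔ ∃ s ∈ S, s * r = 0)
    (hunit : ∀ s ∈ S, IsUnit (φ s))
    (hfrac : ∀ q : Q', ∃ s ∈ S, ∃ r : R, φ s * q = φ r)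
    [IsNoetherianRing Q']
    (htor : ∀ (I : Ideal R) (N : Submodule R (R ⧸ I)),
      (∀ m ∈ N, ∃ s ∈ S, s • m = 0) → N.FG) :
    IsNoetherianRing R := by
  classical
  rw [isNoetherianRing_iff_ideal_fg]
  intro I
  -- the extension of `I` in `Q'`
  set J : Ideal Q' := Submodule.span Q' (φ '' I) with hJ
  have hJfg : J.FG := IsNoetherian.noetherian J
  obtain ⟨T, hT⟩ := hJfg
  -- find a finite subset of `φ '' I` spanning `J`
  have hsub : ∀ t ∈ T, ∃ F : Finset Q',
      ↑F ⊆ φ '' I ∧ t ∈ Submodule.span Q' (F : Set Q') := by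
    intro t ht
    have htJ : t ∈ J := hT ▸ Submodule.subset_span ht
    exact Submodule.mem_span_finite_of_mem_span htJ
  choose F hF1 hF2 using hsub
  set A : Finset Q' := T.attach.biUnion (fun t => F t.1 t.2) with hA
  have hAI : (A : Set Q') ⊆ φ '' I := by
    intro a ha
    simp only [hA, Finset.coe_biUnion, Set.mem_iUnion] at ha
    obtain ⟨t, ht, hat⟩ := ha
    exact hF1 t.1 t.2 hat
  have hAspan : Submodule.span Q' (A : Set Q') = J := by
    apply le_antisymm (Submodule.span_le.2 (hAI.trans Submodule.subset_span))
    rw [← hJ, ← hT]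
    apply Submodule.span_le.2
    intro t ht
    refine Submodule.span_mono ?_ (hF2 t ht)
    intro a ha
    simp only [hA, Finset.coe_biUnion, Set.mem_iUnion]
    exact ⟨⟨t, ht⟩, Finset.mem_attach _ _, ha⟩
  -- choose preimages in `I` for elements of `A`
  have hpre : ∀ a ∈ A, ∃ b, b ∈ (I : Set R) ∧ φ b = a := fun a ha => hAI ha
  choose g hg1 hg2 using hpre
  set B : Finset R := A.attach.image (fun a => g a.1 a.2) with hB
  have hBI : (B : Set R) ⊆ I := by
    intro b hb
    simp only [hB, Finset.coe_image, Set.mem_image] at hb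
    obtain ⟨a, _, rfl⟩ := hb
    exact hg1 a.1 a.2
  set I₀ : Ideal R := Submodule.span R (B : Set R) with hI₀
  have hI₀le : I₀ ≤ I := Submodule.span_le.2 hBI
  have hABspan : Submodule.span Q' (φ '' (B : Set R)) = J := by
    apply le_antisymm
    · exact Submodule.span_le.2 (by
        rintro _ ⟨b, hb, rfl⟩
        exact Submodule.subset_span ⟨b, hBI hb, rfl⟩)
    · rw [← hAspan]
      apply Submodule.span_le.2
      intro a ha
      apply Submodule.subset_span
      refine ⟨g a ha, ?_, hg2 a ha⟩
      simp only [hB, Finset.coe_image, Set.mem_image]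
      exact ⟨⟨a, ha⟩, by simp, rfl⟩
  -- key claim: every x ∈ I has s • x ∈ I₀ for some s ∈ S
  have key : ∀ x ∈ I, ∃ s ∈ S, s * x ∈ I₀ := by
    intro x hx
    have hφx : φ x ∈ Submodule.span Q' (φ '' (B : Set R)) := by
      rw [hABspan]
      exact Submodule.subset_span ⟨x, hx, rfl⟩
    have P : ∃ s ∈ S, ∃ r ∈ I₀, φ s * φ x = φ r := by
      refine Submodule.span_induction
        (p := fun y _ => ∃ s ∈ S, ∃ r ∈ I₀, φ s * y = φ r) ?_ ?_ ?_ ?_ hφx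
      · rintro _ ⟨b, hb, rfl⟩
        exact ⟨1, S.one_mem, b, Submodule.subset_span hb, by rw [map_one, one_mul]⟩
      · exact ⟨1, S.one_mem, 0, I₀.zero_mem, by simp⟩
      · rintro y₁ y₂ _ _ ⟨s₁, hs₁, r₁, hr₁, he₁⟩ ⟨s₂, hs₂, r₂, hr₂, he₂⟩
        obtain ⟨u, hu, v, huv⟩ := hOre s₂ s₁ hs₁
        refine ⟨u * s₂, S.mul_mem hu hs₂, v * r₁ + u * r₂,
          I₀.add_mem (I₀.smul_mem v hr₁) (I₀.smul_mem u hr₂), ?_⟩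
        have h1 : φ (u * s₂) * y₁ = φ (v * r₁) := by
          rw [huv, map_mul, map_mul, mul_assoc, he₁]
        have h2 : φ (u * s₂) * y₂ = φ (u * r₂) := by
          rw [map_mul, map_mul, mul_assoc, he₂, ← map_mul]
        rw [mul_add, h1, h2, ← map_add]
      · rintro q y _ ⟨s, hs, r, hr, he⟩
        obtain ⟨t, ht, a, hta⟩ := hfrac q
        obtain ⟨u, hu, v, huv⟩ := hOre a s hs
        refine ⟨u * t, S.mul_mem hu ht, v * r, I₀.smul_mem v hr, ?_⟩
        have : φ (u * t) * (q * y) = φ u * (φ t * q) * y := by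
          rw [map_mul, mul_assoc, mul_assoc, mul_assoc]
        rw [smul_eq_mul, this, hta, ← map_mul, huv, map_mul, mul_assoc, he, ← map_mul]
    obtain ⟨s, hs, r, hr, he⟩ := P
    have : φ (s * x - r) = 0 := by rw [map_sub, map_mul, he, sub_self]
    obtain ⟨t, ht, hte⟩ := (hker _).1 this
    refine ⟨t * s, S.mul_mem ht hs, ?_⟩
    have : t * s * x = t * r := by
      have h' : t * (s * x) - t * r = 0 := by rw [← mul_sub, hte]
      rw [mul_assoc, sub_eq_zero.1 h']
    rw [this]
    exact I₀.smul_mem t hr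
  -- the image of I in R ⧸ I₀ is S-torsion, hence f.g.
  set N : Submodule R (R ⧸ I₀) := Submodule.map I₀.mkQ I with hN
  have hNfg : N.FG := by
    apply htor
    rintro m ⟨x, hx, rfl⟩
    obtain ⟨s, hs, hsx⟩ := key x hx
    refine ⟨s, hs, ?_⟩
    rw [← map_smul, Submodule.mkQ_apply, Submodule.Quotient.mk_eq_zero]
    simpa [smul_eq_mul] using hsx
  -- conclude
  have hI₀fg : I₀.FG := ⟨B, rfl⟩
  refine Submodule.fg_of_fg_map_of_fg_inf_ker I₀.mkQ (by rwa [← hN]) ?_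
  rw [Submodule.ker_mkQ, inf_eq_right.2 hI₀le]
  exact hI₀fg
end

section
/- Let R be a ring, S a left denominator set, and M a left R-module such that the set of kernels {ker(s_M) | s ∈ S} (where s_M is left multiplication by s on M) has a maximal element. Then every maximal element of this set equals the S-torsion submodule tor_S(M); in particular there exists s ∈ S with s·tor_S(M) = 0. -/
/-- Let `R` be a ring, `S` a left denominator set of `R`, and `M` a
left `R`-module such that the set of kernels `{ker (s_M) | s ∈ S}` (where `s_M` is left
multiplication by `s` on `M`) has a maximal element. Then every maximal element of this
set equals the `S`-torsion submodule `tor_S(M)`; in particular there exists `s ∈ S`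
with `s • tor_S(M) = 0`. -/
theorem stmt15 {R M : Type*} [Ring R] [AddCommGroup M] [Module R M] (S : Submonoid R)
    (h0 : (0 : R) ∉ S)
    (hOre : ∀ (r : R), ∀ s ∈ S, ∃ s' ∈ S, ∃ r' : R, s' * r = r' * s)
    (hden : ∀ (r : R), ∀ s ∈ S, r * s = 0 → ∃ t ∈ S, t * r = 0)
    (hmax : ∃ s ∈ S, ∀ t ∈ S,
      {m : M | s • m = 0} ⊆ {m : M | t • m = 0} → {m : M | t • m = 0} = {m : M | s • m = 0}) :
    (∀ s ∈ S, (∀ t ∈ S,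
        {m : M | s • m = 0} ⊆ {m : M | t • m = 0} → {m : M | t • m = 0} = {m : M | s • m = 0}) →
      {m : M | s • m = 0} = {m : M | ∃ t ∈ S, t • m = 0}) ∧
    ∃ s ∈ S, ∀ m : M, (∃ t ∈ S, t • m = 0) → s • m = 0 := by
  have key : ∀ s ∈ S, (∀ t ∈ S,
      {m : M | s • m = 0} ⊆ {m : M | t • m = 0} → {m : M | t • m = 0} = {m : M | s • m = 0}) →
      {m : M | s • m = 0} = {m : M | ∃ t ∈ S, t • m = 0} := by
    intro s hs hsmax
    apply Set.eq_of_subset_of_subset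
    · intro m hm
      exact ⟨s, hs, hm⟩
    · rintro m ⟨t, ht, htm⟩
      obtain ⟨s', hs', r', hcomm⟩ := hOre s t ht
      have hss' : s' * s ∈ S := S.mul_mem hs' hs
      have hsub : {m : M | s • m = 0} ⊆ {m : M | (s' * s) • m = 0} := by
        intro x hx
        simp only [Set.mem_setOf_eq] at hx ⊢
        rw [mul_smul, hx, smul_zero]
      have heq := hsmax (s' * s) hss' hsub
      have : (s' * s) • m = 0 := by
        rw [hcomm, mul_smul, htm, smul_zero]
      have hm : m ∈ {m : M | (s' * s) • m = 0} := this
      rw [heq] at hm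
      exact hm
  refine ⟨key, ?_⟩
  obtain ⟨s, hs, hsmax⟩ := hmax
  refine ⟨s, hs, fun m hm => ?_⟩
  have := key s hs hsmax
  have : m ∈ {m : M | s • m = 0} := by rw [this]; exact hm
  exact this
end

section
/- Let R be a ring whose regular elements C form a left Ore set such that Q = C^{-1}R is left Noetherian, and let n be the prime radical of R. Then C^{-1}n is an ideal of Q equal to the prime radical n_Q of Q, and (C^{-1}n)^i = C^{-1}(n^i) for all i ≥ 1; consequently the nilpotency degrees of n and n_Q coincide and are finite. -/
/-- Powers of a two-sided ideal in a possibly noncommutative ring: `idealPow n 0 = ⊤`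
and `idealPow n (k+1)` is the left ideal generated by products `a * b` with `a ∈ n`,
`b ∈ idealPow n k`. -/
def idealPow {R : Type*} [Ring R] (n : Ideal R) : ℕ → Ideal R
  | 0 => ⊤
  | k + 1 => Ideal.span {x : R | ∃ a ∈ n, ∃ b ∈ idealPow n k, x = a * b}

section Aux

variable {S : Type*} [Ring S]

/-- Right absorption: together with being a left ideal this makes an ideal two-sided. -/
def RAbs (A : Ideal S) : Prop := ∀ a ∈ A, ∀ r : S, a * r ∈ A

/-- Product of two (two-sided) ideals, as a left ideal span. -/
def mul2 (A B : Ideal S) : Ideal S := Ideal.span {x : S | ∃ a ∈ A, ∃ b ∈ B, x = a * b}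

lemma mem_mul2 {A B : Ideal S} {a b : S} (ha : a ∈ A) (hb : b ∈ B) : a * b ∈ mul2 A B :=
  Ideal.subset_span ⟨a, ha, b, hb, rfl⟩

lemma mul2_le {A B C : Ideal S} (h : ∀ a ∈ A, ∀ b ∈ B, a * b ∈ C) : mul2 A B ≤ C :=
  Ideal.span_le.mpr (by rintro x ⟨a, ha, b, hb, rfl⟩; exact h a ha b hb)

lemma mul2_mono {A A' B B' : Ideal S} (hA : A ≤ A') (hB : B ≤ B') : mul2 A B ≤ mul2 A' B' :=
  mul2_le fun a ha b hb => mem_mul2 (hA ha) (hB hb)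

lemma idealPow_succ (n : Ideal S) (k : ℕ) : idealPow n (k + 1) = mul2 n (idealPow n k) := rfl

lemma rAbs_idealPow (n : Ideal S) (k : ℕ) : RAbs (idealPow n k) := by
  induction k with
  | zero => intro a _ r; exact Submodule.mem_top
  | succ k ih =>
    intro a ha r
    rw [idealPow_succ] at ha ⊢
    induction ha using Submodule.span_induction with
    | mem x hx =>
      obtain ⟨u, hu, v, hv, rfl⟩ := hx
      rw [mul_assoc]
      exact mem_mul2 hu (ih v hv r)
    | zero => rw [zero_mul]; exact zero_mem _
    | add x y _ _ hx hy => rw [add_mul]; exact add_mem hx hy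
    | smul q x _ hx => rw [smul_eq_mul, mul_assoc]; exact Ideal.mul_mem_left _ q hx

lemma rAbs_primeRadical : RAbs (primeRadical S) := by
  intro a ha r
  exact Submodule.mem_sInf.mpr fun P hP => hP.1 a (Submodule.mem_sInf.mp ha P hP) r

lemma pow_le_prime {A P : Ideal S} (hA : RAbs A) (hP : IsPrimeTwoSided P) :
    ∀ m : ℕ, idealPow A m ≤ P → A ≤ P := by
  intro m
  induction m with
  | zero => intro h; exact (hP.2.1 (top_le_iff.mp h)).elim
  | succ m ih =>
    intro h
    by_cases hAP : A ≤ P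
    · exact hAP
    · obtain ⟨j, hj, hjP⟩ := SetLike.not_le_iff_exists.mp hAP
      apply ih
      intro y hy
      have hforall : ∀ r : S, j * r * y ∈ P := fun r =>
        h (by rw [idealPow_succ]; exact mem_mul2 (hA j hj r) hy)
      rcases hP.2.2 j y hforall with h1 | h2
      · exact absurd h1 hjP
      · exact h2

/-- Product of a list of ideals. -/
def listProd (L : List (Ideal S)) : Ideal S := L.foldr mul2 ⊤

lemma pow_le_listProd {N : Ideal S} :
    ∀ L : List (Ideal S), (∀ P ∈ L, N ≤ P) → idealPow N L.length ≤ listProd L := by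
  intro L
  induction L with
  | nil => intro _; exact le_rfl
  | cons P L ih =>
    intro h
    rw [List.length_cons, idealPow_succ]
    exact mul2_mono (h P (List.mem_cons_self (a := P) (l := L))) (ih fun P' hP' => h P' (List.mem_cons_of_mem _ hP'))

lemma mul2_assoc_le {P Y X : Ideal S} (hP : RAbs P) :
    mul2 P (mul2 Y X) ≤ mul2 (mul2 P Y) X := by
  apply mul2_le
  intro p hp m hm
  induction hm using Submodule.span_induction generalizing p with
  | mem x hx =>
    obtain ⟨y, hy, x', hx', rfl⟩ := hx
    rw [← mul_assoc]
    exact mem_mul2 (mem_mul2 hp hy) hx'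
  | zero => rw [mul_zero]; exact zero_mem _
  | add x y _ _ hx hy => rw [mul_add]; exact add_mem (hx p hp) (hy p hp)
  | smul q x _ hx => rw [smul_eq_mul, ← mul_assoc]; exact hx (p * q) (hP p hp q)

lemma foldr_mono_init {X X' : Ideal S} (h : X ≤ X') :
    ∀ L : List (Ideal S), L.foldr mul2 X ≤ L.foldr mul2 X' := by
  intro L
  induction L with
  | nil => exact h
  | cons P L ih => exact mul2_mono le_rfl ih

lemma foldr_le_mul2 {X : Ideal S} :
    ∀ L : List (Ideal S), (∀ P ∈ L, RAbs P) → L.foldr mul2 X ≤ mul2 (listProd L) X := by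
  intro L
  induction L with
  | nil =>
    intro _ x hx
    exact (one_mul x) ▸ mem_mul2 Submodule.mem_top hx
  | cons P L ih =>
    intro h
    calc (P :: L).foldr mul2 X = mul2 P (L.foldr mul2 X) := rfl
      _ ≤ mul2 P (mul2 (listProd L) X) :=
          mul2_mono le_rfl (ih fun P' hP' => h P' (List.mem_cons_of_mem _ hP'))
      _ ≤ mul2 (mul2 P (listProd L)) X := mul2_assoc_le (h P (List.mem_cons_self (a := P) (l := L)))
      _ = mul2 (listProd (P :: L)) X := rfl

end Aux

section Prod

variable {S : Type*} [Ring S]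

lemma span_mul_right (a : S) :
    ∀ s ∈ Ideal.span {x : S | ∃ y, x = a * y}, ∀ r : S,
      s * r ∈ Ideal.span {x : S | ∃ y, x = a * y} := by
  intro s hs
  induction hs using Submodule.span_induction with
  | mem x hx =>
    obtain ⟨y, rfl⟩ := hx
    intro r
    exact Ideal.subset_span ⟨y * r, by rw [mul_assoc]⟩
  | zero => intro r; rw [zero_mul]; exact zero_mem _
  | add x y _ _ hx hy => intro r; rw [add_mul]; exact add_mem (hx r) (hy r)
  | smul q x _ hx => intro r; rw [smul_eq_mul, mul_assoc]; exact Ideal.mul_mem_left _ q (hx r)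

lemma prodPrimes [IsNoetherianRing S] :
    ∃ L : List (Ideal S), (∀ P ∈ L, IsPrimeTwoSided P) ∧ listProd L ≤ ⊥ := by
  have wf : WellFounded ((· > ·) : Ideal S → Ideal S → Prop) := isNoetherian_iff.mp inferInstance
  have main : ∀ I : Ideal S, RAbs I →
      ∃ L : List (Ideal S), (∀ P ∈ L, IsPrimeTwoSided P) ∧ listProd L ≤ I := by
    intro I
    refine WellFounded.induction wf
      (C := fun I => RAbs I →
        ∃ L : List (Ideal S), (∀ P ∈ L, IsPrimeTwoSided P) ∧ listProd L ≤ I) I ?_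
    clear I
    intro J ih hJabs
    by_cases htop : J = ⊤
    · exact ⟨[], by simp, by rw [htop]; exact le_top⟩
    by_cases hpr : IsPrimeTwoSided J
    · refine ⟨[J], by simp [hpr], ?_⟩
      show mul2 J ⊤ ≤ J
      exact mul2_le fun a ha b _ => hJabs a ha b
    have h3 : ¬ (∀ a b : S, (∀ r : S, a * r * b ∈ J) → a ∈ J ∨ b ∈ J) :=
      fun h3 => hpr ⟨hJabs, htop, h3⟩
    push_neg at h3
    obtain ⟨a, b, hab, haJ, hbJ⟩ := h3
    -- the two enlarged ideals
    have hamem : a ∈ J ⊔ Ideal.span {x : S | ∃ y, x = a * y} :=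
      Submodule.mem_sup_right (Ideal.subset_span ⟨1, (mul_one a).symm⟩)
    have hbmem : b ∈ J ⊔ Ideal.span {x : S | ∃ y, x = b * y} :=
      Submodule.mem_sup_right (Ideal.subset_span ⟨1, (mul_one b).symm⟩)
    have hJa : J < J ⊔ Ideal.span {x : S | ∃ y, x = a * y} :=
      lt_of_le_of_ne le_sup_left (fun he => haJ (by rw [he]; exact hamem))
    have hJb : J < J ⊔ Ideal.span {x : S | ∃ y, x = b * y} :=
      lt_of_le_of_ne le_sup_left (fun he => hbJ (by rw [he]; exact hbmem))
    have hRa : RAbs (J ⊔ Ideal.span {x : S | ∃ y, x = a * y}) := by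
      intro x hx r
      obtain ⟨i, hi, s, hs, rfl⟩ := Submodule.mem_sup.mp hx
      rw [add_mul]
      exact Submodule.add_mem_sup (hJabs i hi r) (span_mul_right a s hs r)
    have hRb : RAbs (J ⊔ Ideal.span {x : S | ∃ y, x = b * y}) := by
      intro x hx r
      obtain ⟨i, hi, s, hs, rfl⟩ := Submodule.mem_sup.mp hx
      rw [add_mul]
      exact Submodule.add_mem_sup (hJabs i hi r) (span_mul_right b s hs r)
    obtain ⟨La, hLa, hprodA⟩ := ih _ hJa hRa
    obtain ⟨Lb, hLb, hprodB⟩ := ih _ hJb hRb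
    -- s * b ∈ J for s in the span generated by a
    have sb : ∀ s ∈ Ideal.span {x : S | ∃ y, x = a * y}, s * b ∈ J := by
      intro s hs
      induction hs using Submodule.span_induction with
      | mem x hx => obtain ⟨y, rfl⟩ := hx; exact hab y
      | zero => rw [zero_mul]; exact zero_mem _
      | add x y _ _ hx hy => rw [add_mul]; exact add_mem hx hy
      | smul q x _ hx => rw [smul_eq_mul, mul_assoc]; exact Ideal.mul_mem_left _ q hx
    have ss : ∀ s' ∈ Ideal.span {x : S | ∃ y, x = b * y},
        ∀ s ∈ Ideal.span {x : S | ∃ y, x = a * y}, s * s' ∈ J := by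
      intro s' hs'
      induction hs' using Submodule.span_induction with
      | mem x hx =>
        intro s hs
        obtain ⟨y, rfl⟩ := hx
        rw [← mul_assoc]
        exact hJabs _ (sb s hs) y
      | zero => intro s _; rw [mul_zero]; exact zero_mem _
      | add x y _ _ hx hy => intro s hs; rw [mul_add]; exact add_mem (hx s hs) (hy s hs)
      | smul q x _ hx =>
        intro s hs
        rw [smul_eq_mul, ← mul_assoc]
        exact hx (s * q) (span_mul_right a s hs q)
    have key : mul2 (J ⊔ Ideal.span {x : S | ∃ y, x = a * y})
        (J ⊔ Ideal.span {x : S | ∃ y, x = b * y}) ≤ J := by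
      apply mul2_le
      intro j hj j' hj'
      obtain ⟨i, hi, s, hs, rfl⟩ := Submodule.mem_sup.mp hj
      obtain ⟨i', hi', s', hs', rfl⟩ := Submodule.mem_sup.mp hj'
      have hexp : (i + s) * (i' + s') = i * (i' + s') + (s * i' + s * s') := by
        noncomm_ring
      rw [hexp]
      exact add_mem (hJabs i hi _)
        (add_mem (Ideal.mul_mem_left _ s hi') (ss s' hs' s hs))
    refine ⟨La ++ Lb, ?_, ?_⟩
    · intro P hP
      rcases List.mem_append.mp hP with h | h
      · exact hLa P h
      · exact hLb P h
    · calc listProd (La ++ Lb) = La.foldr mul2 (listProd Lb) := by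
            rw [listProd, List.foldr_append]; rfl
        _ ≤ La.foldr mul2 (J ⊔ Ideal.span {x : S | ∃ y, x = b * y}) :=
            foldr_mono_init hprodB La
        _ ≤ mul2 (listProd La) (J ⊔ Ideal.span {x : S | ∃ y, x = b * y}) :=
            foldr_le_mul2 La (fun P hP => (hLa P hP).1)
        _ ≤ mul2 (J ⊔ Ideal.span {x : S | ∃ y, x = a * y})
              (J ⊔ Ideal.span {x : S | ∃ y, x = b * y}) := mul2_mono hprodA le_rfl
        _ ≤ J := key
  refine main ⊥ ?_
  intro x hx r
  rw [Submodule.mem_bot] at hx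
  rw [hx, zero_mul]
  exact zero_mem _

end Prod

section Loc

variable {R Q : Type*} [Ring R] [Ring Q]

/-- The left ideal of fractions `c⁻¹ a` with `a ∈ A`. -/
def fracIdeal (φ : R →+* Q)
    (hOre : ∀ (r c : R), IsRegular c → ∃ c' r' : R, IsRegular c' ∧ c' * r = r' * c)
    (hunit : ∀ c : R, IsRegular c → IsUnit (φ c))
    (hfrac : ∀ q : Q, ∃ c r : R, IsRegular c ∧ φ c * q = φ r)
    (A : Ideal R) : Ideal Q where
  carrier := {x | ∃ c a : R, IsRegular c ∧ a ∈ A ∧ φ c * x = φ a}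
  zero_mem' := ⟨1, 0, isRegular_one, A.zero_mem, by simp⟩
  add_mem' := by
    rintro x y ⟨c₁, a₁, hc₁, ha₁, h₁⟩ ⟨c₂, a₂, hc₂, ha₂, h₂⟩
    obtain ⟨c', r', hc', h⟩ := hOre c₁ c₂ hc₂
    refine ⟨c' * c₁, c' * a₁ + r' * a₂, hc'.mul hc₁,
      add_mem (Ideal.mul_mem_left A c' ha₁) (Ideal.mul_mem_left A r' ha₂), ?_⟩
    calc φ (c' * c₁) * (x + y)
        = φ c' * (φ c₁ * x) + φ (c' * c₁) * y := by rw [map_mul, mul_add, mul_assoc]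
      _ = φ c' * (φ c₁ * x) + φ r' * (φ c₂ * y) := by rw [h, map_mul, mul_assoc]
      _ = φ (c' * a₁ + r' * a₂) := by rw [h₁, h₂, map_add, map_mul, map_mul]
  smul_mem' := by
    rintro q x ⟨c, a, hc, ha, hx⟩
    obtain ⟨u, hu⟩ := hunit c hc
    obtain ⟨e, w, he, hew⟩ := hfrac (q * ↑u⁻¹)
    refine ⟨e, w * a, he, Ideal.mul_mem_left A w ha, ?_⟩
    have hq : q * x = (q * ↑u⁻¹) * (φ c * x) := by
      rw [← hu, mul_assoc, Units.inv_mul_cancel_left]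
    rw [smul_eq_mul, hq, ← mul_assoc, hew, hx, ← map_mul]

lemma mem_fracIdeal {φ : R →+* Q} {hOre} {hunit} {hfrac} {A : Ideal R} {x : Q} :
    x ∈ fracIdeal φ hOre hunit hfrac A ↔
      ∃ c a : R, IsRegular c ∧ a ∈ A ∧ φ c * x = φ a := Iff.rfl

lemma mem_fracIdeal_of_mem {φ : R →+* Q} {hOre} {hunit} {hfrac} {A : Ideal R} {a : R}
    (ha : a ∈ A) : φ a ∈ fracIdeal φ hOre hunit hfrac A :=
  ⟨1, a, isRegular_one, ha, by rw [map_one, one_mul]⟩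

/-- Key saturation lemma: if `Q` is left Noetherian, the fraction ideal of a two-sided
ideal absorbs right multiplication by inverses of regular elements. -/
lemma fracIdeal_mul_inv [IsNoetherianRing Q] (φ : R →+* Q)
    (hOre : ∀ (r c : R), IsRegular c → ∃ c' r' : R, IsRegular c' ∧ c' * r = r' * c)
    (hunit : ∀ c : R, IsRegular c → IsUnit (φ c))
    (hfrac : ∀ q : Q, ∃ c r : R, IsRegular c ∧ φ c * q = φ r)
    {A : Ideal R} (hA : RAbs A) {c : R} (hc : IsRegular c) (u : Qˣ) (hu : ↑u = φ c) :
    ∀ x ∈ fracIdeal φ hOre hunit hfrac A, x * ↑u⁻¹ ∈ fracIdeal φ hOre hunit hfrac A := by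
  set F := fracIdeal φ hOre hunit hfrac A with hF
  let f : Q →ₗ[Q] Q :=
    { toFun := fun x => x * ↑u⁻¹
      map_add' := fun x y => add_mul x y _
      map_smul' := fun q x => by simp only [smul_eq_mul, RingHom.id_apply]; rw [mul_assoc] }
  have hstep : F ≤ Submodule.map f F := by
    intro x hx
    refine ⟨x * φ c, ?_, ?_⟩
    · obtain ⟨d, a, hd, ha, hdx⟩ := hx
      exact ⟨d, a * c, hd, hA a ha c, by rw [← mul_assoc, hdx, map_mul]⟩
    · show x * φ c * ↑u⁻¹ = x
      rw [← hu, Units.mul_inv_cancel_right]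
  have hmono : ∀ n : ℕ, (Submodule.map f)^[n] F ≤ (Submodule.map f)^[n + 1] F := by
    intro n
    induction n with
    | zero => simpa using hstep
    | succ n ih =>
      rw [Function.iterate_succ_apply', Function.iterate_succ_apply']
      exact Submodule.map_mono ih
  obtain ⟨N, hN⟩ := monotone_stabilizes_iff_noetherian.mpr inferInstance
    ⟨fun n => (Submodule.map f)^[n] F, monotone_nat_of_le_succ hmono⟩
  have hNN : (Submodule.map f)^[N] F = (Submodule.map f)^[N] (Submodule.map f F) := by
    have h1 := hN (N + 1) (Nat.le_succ N)
    simpa [Function.iterate_succ_apply] using h1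
  have hfi : Function.Injective f := by
    intro x y hxy
    have hxy' : x * ↑u⁻¹ = y * ↑u⁻¹ := hxy
    calc x = x * ↑u⁻¹ * ↑u := (Units.inv_mul_cancel_right x u).symm
      _ = y * ↑u⁻¹ * ↑u := by rw [hxy']
      _ = y := Units.inv_mul_cancel_right y u
  have heq : F = Submodule.map f F :=
    (Function.Injective.iterate (Submodule.map_injective_of_injective hfi) N) hNN
  intro x hx
  have : f x ∈ Submodule.map f F := ⟨x, hx, rfl⟩
  rw [← heq] at this
  exact this

/-- The fraction ideal of a two-sided ideal is two-sided. -/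
lemma fracIdeal_mul_right [IsNoetherianRing Q] (φ : R →+* Q)
    (hOre : ∀ (r c : R), IsRegular c → ∃ c' r' : R, IsRegular c' ∧ c' * r = r' * c)
    (hunit : ∀ c : R, IsRegular c → IsUnit (φ c))
    (hfrac : ∀ q : Q, ∃ c r : R, IsRegular c ∧ φ c * q = φ r)
    {A : Ideal R} (hA : RAbs A) :
    ∀ x ∈ fracIdeal φ hOre hunit hfrac A, ∀ y : Q,
      x * y ∈ fracIdeal φ hOre hunit hfrac A := by
  intro x hx y
  obtain ⟨c, r, hc, hcy⟩ := hfrac y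
  obtain ⟨u, hu⟩ := hunit c hc
  have hy : y = ↑u⁻¹ * φ r := by rw [← hcy, ← hu, Units.inv_mul_cancel_left]
  obtain ⟨e, a, he, ha, hez⟩ := fracIdeal_mul_inv φ hOre hunit hfrac hA hc u hu x hx
  refine ⟨e, a * r, he, hA a ha r, ?_⟩
  rw [hy, ← mul_assoc, ← mul_assoc, mul_assoc (φ e) x, hez, ← map_mul]

end Loc

section Contraction

variable {R Q : Type*} [Ring R] [Ring Q]

/-- Contraction of a two-sided prime of `Q` is a two-sided prime of `R`. -/
lemma comap_isPrimeTwoSided [IsNoetherianRing Q] (φ : R →+* Q)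
    (hOre : ∀ (r c : R), IsRegular c → ∃ c' r' : R, IsRegular c' ∧ c' * r = r' * c)
    (hunit : ∀ c : R, IsRegular c → IsUnit (φ c))
    (hfrac : ∀ q : Q, ∃ c r : R, IsRegular c ∧ φ c * q = φ r)
    {P : Ideal Q} (hP : IsPrimeTwoSided P) :
    IsPrimeTwoSided (Ideal.comap φ P) := by
  refine ⟨?_, ?_, ?_⟩
  · intro a ha r
    show φ (a * r) ∈ P
    rw [map_mul]
    exact hP.1 (φ a) ha (φ r)
  · intro h
    apply hP.2.1
    apply Ideal.eq_top_of_isUnit_mem P (x := (1 : Q)) _ isUnit_one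
    have : (1 : R) ∈ Ideal.comap φ P := by rw [h]; exact Submodule.mem_top
    simpa using this
  · intro a b hab
    -- the two-sided ideal T of elements t with t R b ⊆ comap φ P
    set T : Ideal R :=
      { carrier := {t : R | ∀ r : R, t * r * b ∈ Ideal.comap φ P}
        zero_mem' := by intro r; rw [zero_mul, zero_mul]; exact zero_mem _
        add_mem' := by
          intro x y hx hy r
          rw [add_mul, add_mul]
          exact add_mem (hx r) (hy r)
        smul_mem' := by
          intro q x hx r
          rw [smul_eq_mul, mul_assoc, mul_assoc]
          have := hx r
          rw [mul_assoc] at this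
          exact Ideal.mul_mem_left _ q this } with hT
    have hTabs : RAbs T := by
      intro t ht s r
      have := ht (s * r)
      simpa [mul_assoc] using this
    have haT : a ∈ T := hab
    have key : ∀ q : Q, φ a * q * φ b ∈ P := by
      intro q
      obtain ⟨c, r, hc, hcq⟩ := hfrac q
      obtain ⟨u, hu⟩ := hunit c hc
      have hq : q = ↑u⁻¹ * φ r := by rw [← hcq, ← hu, Units.inv_mul_cancel_left]
      obtain ⟨e, t, he, htT, het⟩ :=
        fracIdeal_mul_inv φ hOre hunit hfrac hTabs hc u hu (φ a)
          (mem_fracIdeal_of_mem haT)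
      obtain ⟨v, hv⟩ := hunit e he
      have hcalc : φ e * (φ a * q * φ b) = φ (t * r * b) := by
        calc φ e * (φ a * q * φ b)
            = (φ e * (φ a * ↑u⁻¹)) * (φ r * φ b) := by rw [hq]; simp only [mul_assoc]
          _ = φ t * (φ r * φ b) := by rw [het]
          _ = φ (t * r * b) := by rw [map_mul, map_mul, mul_assoc]
      have hmem : φ (t * r * b) ∈ P := htT r
      rw [← hcalc] at hmem
      have h2 := Ideal.mul_mem_left P (↑v⁻¹) hmem
      rwa [← hv, Units.inv_mul_cancel_left] at h2
    rcases hP.2.2 (φ a) (φ b) key with h | h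
    · exact Or.inl h
    · exact Or.inr h

/-- Pushing powers of ideals forward along `φ`. -/
lemma mapPow (φ : R →+* Q) {J : Ideal R} {J' : Ideal Q}
    (h : ∀ a ∈ J, φ a ∈ J') :
    ∀ m : ℕ, ∀ x ∈ idealPow J m, φ x ∈ idealPow J' m := by
  intro m
  induction m with
  | zero => intro x _; exact Submodule.mem_top
  | succ m ih =>
    intro x hx
    rw [idealPow_succ] at hx ⊢
    induction hx using Submodule.span_induction with
    | mem z hz =>
      obtain ⟨a, ha, b, hb, rfl⟩ := hz
      rw [map_mul]
      exact mem_mul2 (h a ha) (ih b hb)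
    | zero => rw [map_zero]; exact zero_mem _
    | add z w _ _ hz hw => rw [map_add]; exact add_mem hz hw
    | smul q z _ hz => rw [smul_eq_mul, map_mul]; exact Ideal.mul_mem_left _ (φ q) hz

end Contraction

lemma mem_primeRadical {S : Type*} [Ring S] {x : S} :
    x ∈ primeRadical S ↔ ∀ P : Ideal S, IsPrimeTwoSided P → x ∈ P := by
  unfold primeRadical
  rw [Submodule.mem_sInf]
  exact ⟨fun h P hP => h P hP, fun h P hP => h P hP⟩


/-- Let `R` be a ring whose regular elements `C` form a left Ore set
such that `Q = C⁻¹R` is left Noetherian, and let `n` be the prime radical of `R`. Then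
`C⁻¹n` is an ideal of `Q` equal to the prime radical `n_Q` of `Q` (i.e. `n_Q` consists
exactly of the fractions `(φ c)⁻¹ (φ a)` with `c` regular and `a ∈ n`), and
`(C⁻¹n)^i = C⁻¹(n^i)` for all `i ≥ 1`; consequently the nilpotency degrees of `n` and
`n_Q` coincide and are finite. -/
theorem stmt16 {R Q : Type*} [Ring R] [Ring Q]
    (hOre : ∀ (r c : R), IsRegular c → ∃ c' r' : R, IsRegular c' ∧ c' * r = r' * c)
    (φ : R →+* Q) (hinj : Function.Injective φ)
    (hunit : ∀ c : R, IsRegular c → IsUnit (φ c))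
    (hfrac : ∀ q : Q, ∃ c r : R, IsRegular c ∧ φ c * q = φ r)
    [IsNoetherianRing Q] :
    (∀ q : Q, q ∈ primeRadical Q ↔
      ∃ c a : R, IsRegular c ∧ a ∈ primeRadical R ∧ φ c * q = φ a) ∧
    (∀ i : ℕ, 1 ≤ i → ∀ q : Q, q ∈ idealPow (primeRadical Q) i ↔
      ∃ c a : R, IsRegular c ∧ a ∈ idealPow (primeRadical R) i ∧ φ c * q = φ a) ∧
    (∀ i : ℕ, idealPow (primeRadical R) i = ⊥ ↔ idealPow (primeRadical Q) i = ⊥) ∧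
    (∃ k : ℕ, idealPow (primeRadical R) k = ⊥) := by
  have hradmap : ∀ a ∈ primeRadical R, φ a ∈ primeRadical Q := by
    intro a ha
    rw [mem_primeRadical]
    intro P hP
    exact mem_primeRadical.mp ha (Ideal.comap φ P)
      (comap_isPrimeTwoSided φ hOre hunit hfrac hP)
  obtain ⟨L, hLp, hLbot⟩ := prodPrimes (S := Q)
  have hpowQ : idealPow (primeRadical Q) L.length = ⊥ :=
    le_bot_iff.mp ((pow_le_listProd L fun P hP => sInf_le (hLp P hP)).trans hLbot)
  have hI0 : Ideal.comap φ (primeRadical Q) ≤ primeRadical R := by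
    have habs : RAbs (Ideal.comap φ (primeRadical Q)) := by
      intro x hx r
      show φ (x * r) ∈ primeRadical Q
      rw [map_mul]
      exact rAbs_primeRadical (φ x) hx (φ r)
    have hmap : ∀ a ∈ Ideal.comap φ (primeRadical Q), φ a ∈ primeRadical Q := fun a ha => ha
    have hbot : idealPow (Ideal.comap φ (primeRadical Q)) L.length = ⊥ := by
      apply eq_bot_iff.mpr
      intro y hy
      have h1 := mapPow φ hmap L.length y hy
      rw [hpowQ, Submodule.mem_bot] at h1
      rw [Submodule.mem_bot]
      apply hinj
      rw [h1, map_zero]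
    intro x hx
    rw [mem_primeRadical]
    intro P hP
    exact pow_le_prime habs hP L.length (by rw [hbot]; exact bot_le) hx
  have h1 : ∀ q : Q, q ∈ primeRadical Q ↔
      ∃ c a : R, IsRegular c ∧ a ∈ primeRadical R ∧ φ c * q = φ a := by
    intro q
    constructor
    · intro hq
      obtain ⟨c, r, hc, hcq⟩ := hfrac q
      refine ⟨c, r, hc, hI0 (show φ r ∈ primeRadical Q from ?_), hcq⟩
      rw [← hcq]
      exact Ideal.mul_mem_left _ (φ c) hq
    · rintro ⟨c, a, hc, ha, hca⟩
      obtain ⟨u, hu⟩ := hunit c hc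
      have hq : q = ↑u⁻¹ * φ a := by rw [← hca, ← hu, Units.inv_mul_cancel_left]
      rw [hq]
      exact Ideal.mul_mem_left _ _ (hradmap a ha)
  have h2f : ∀ i : ℕ, ∀ q ∈ idealPow (primeRadical Q) i,
      ∃ c a : R, IsRegular c ∧ a ∈ idealPow (primeRadical R) i ∧ φ c * q = φ a := by
    intro i
    induction i with
    | zero =>
      intro q _
      obtain ⟨c, r, hc, h⟩ := hfrac q
      exact ⟨c, r, hc, Submodule.mem_top, h⟩
    | succ i ih =>
      intro q hq
      simp only [idealPow] at hq
      have hmem : q ∈ fracIdeal φ hOre hunit hfrac (idealPow (primeRadical R) (i + 1)) := by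
        induction hq using Submodule.span_induction with
        | mem x hx =>
          obtain ⟨z, hz, y, hy, rfl⟩ := hx
          obtain ⟨c, a, hc, ha, hcz⟩ := (h1 z).mp hz
          obtain ⟨u, hu⟩ := hunit c hc
          have hz' : z = ↑u⁻¹ * φ a := by rw [← hcz, ← hu, Units.inv_mul_cancel_left]
          obtain ⟨d, b, hd, hb, hdy⟩ := ih y hy
          obtain ⟨v, hv⟩ := hunit d hd
          have hy' : y = ↑v⁻¹ * φ b := by rw [← hdy, ← hv, Units.inv_mul_cancel_left]
          obtain ⟨e, a', he, ha', hea⟩ :=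
            fracIdeal_mul_inv φ hOre hunit hfrac rAbs_primeRadical hd v hv (φ a)
              (mem_fracIdeal_of_mem ha)
          rw [hz', mul_assoc]
          apply Ideal.mul_mem_left
          refine ⟨e, a' * b, he, ?_, ?_⟩
          · rw [idealPow_succ]; exact mem_mul2 ha' hb
          · rw [hy', ← mul_assoc (φ a), ← mul_assoc, hea, ← map_mul]
        | zero => exact zero_mem _
        | add x y _ _ hx hy => exact add_mem hx hy
        | smul w x _ hx => exact Submodule.smul_mem _ w hx
      exact hmem
  have h2 : ∀ i : ℕ, 1 ≤ i → ∀ q : Q, q ∈ idealPow (primeRadical Q) i ↔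
      ∃ c a : R, IsRegular c ∧ a ∈ idealPow (primeRadical R) i ∧ φ c * q = φ a := by
    intro i _ q
    constructor
    · exact h2f i q
    · rintro ⟨c, a, hc, ha, hca⟩
      obtain ⟨u, hu⟩ := hunit c hc
      have hq : q = ↑u⁻¹ * φ a := by rw [← hca, ← hu, Units.inv_mul_cancel_left]
      rw [hq]
      exact Ideal.mul_mem_left _ _ (mapPow φ hradmap i a ha)
  have h3 : ∀ i : ℕ, idealPow (primeRadical R) i = ⊥ ↔ idealPow (primeRadical Q) i = ⊥ := by
    intro i
    cases i with
    | zero =>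
      constructor
      · intro h
        have h10 : (1 : R) = 0 := by
          have hm : (1 : R) ∈ idealPow (primeRadical R) 0 := Submodule.mem_top
          rw [h, Submodule.mem_bot] at hm
          exact hm
        apply eq_bot_iff.mpr
        intro x _
        rw [Submodule.mem_bot]
        calc x = x * (1 : Q) := (mul_one x).symm
          _ = x * φ 1 := by rw [map_one]
          _ = x * φ 0 := by rw [h10]
          _ = 0 := by rw [map_zero, mul_zero]
      · intro h
        have h10 : (1 : Q) = 0 := by
          have hm : (1 : Q) ∈ idealPow (primeRadical Q) 0 := Submodule.mem_top
          rw [h, Submodule.mem_bot] at hm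
          exact hm
        apply eq_bot_iff.mpr
        intro x _
        rw [Submodule.mem_bot]
        apply hinj
        rw [map_zero, ← mul_one (φ x), h10, mul_zero]
    | succ i =>
      constructor
      · intro h
        apply eq_bot_iff.mpr
        intro q hq
        obtain ⟨c, a, hc, ha, hca⟩ := h2f (i + 1) q hq
        rw [h, Submodule.mem_bot] at ha
        obtain ⟨u, hu⟩ := hunit c hc
        rw [Submodule.mem_bot]
        calc q = ↑u⁻¹ * (φ c * q) := by rw [← hu, Units.inv_mul_cancel_left]
          _ = ↑u⁻¹ * φ a := by rw [hca]
          _ = 0 := by rw [ha, map_zero, mul_zero]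
      · intro h
        apply eq_bot_iff.mpr
        intro x hx
        have h1' := mapPow φ hradmap (i + 1) x hx
        rw [h, Submodule.mem_bot] at h1'
        rw [Submodule.mem_bot]
        apply hinj
        rw [h1', map_zero]
  exact ⟨h1, h2, h3, ⟨L.length, (h3 L.length).mpr hpowQ⟩⟩
end

section
/- Let R be a ring, S a left denominator set of R, and I an ideal of R with I ∩ S = ∅ such that S^{-1}I is a (two-sided) ideal of S^{-1}R. Then the image S̄ of S in R/I is a left denominator set of R/I. -/
/-- Let `R` be a ring, `S` a left denominator set of `R`, and `I` a
two-sided ideal of `R` with `I ∩ S = ∅` such that `S⁻¹I` is a (two-sided) ideal of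
`S⁻¹R`. Then the image `S̄` of `S` in `R/I` (modelled by a surjective ring homomorphism
`ψ : R → R̄` with kernel `I`) is a left denominator set of `R/I`. Here the localization
`S⁻¹R` is modelled by a ring `Q'` and a homomorphism `φ : R → Q'`, and
`S⁻¹I = {(φ s)⁻¹ (φ a) | s ∈ S, a ∈ I}` is assumed to be closed under right
multiplication by elements of `Q'` (it is automatically a left ideal). -/
theorem stmt17 {R Q' Rbar : Type*} [Ring R] [Ring Q'] [Ring Rbar] (S : Submonoid R)
    (h0 : (0 : R) ∉ S)
    (hOre : ∀ (r : R), ∀ s ∈ S, ∃ s' ∈ S, ∃ r' : R, s' * r = r' * s)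
    (hden : ∀ (r : R), ∀ s ∈ S, r * s = 0 → ∃ t ∈ S, t * r = 0)
    (I : Ideal R) (hItwo : ∀ a ∈ I, ∀ r : R, a * r ∈ I)
    (hdisj : ∀ s ∈ S, s ∉ I)
    (φ : R →+* Q')
    (hker : ∀ r : R, φ r = 0 ↔ ∃ s ∈ S, s * r = 0)
    (hunit : ∀ s ∈ S, IsUnit (φ s))
    (hfrac : ∀ q : Q', ∃ s ∈ S, ∃ r : R, φ s * q = φ r)
    (hSI : ∀ q : Q', (∃ s ∈ S, ∃ a ∈ I, φ s * q = φ a) →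
      ∀ p : Q', ∃ s ∈ S, ∃ a ∈ I, φ s * (q * p) = φ a)
    (ψ : R →+* Rbar) (hψsurj : Function.Surjective ψ)
    (hψker : ∀ r : R, ψ r = 0 ↔ r ∈ I) :
    (∀ (rb : Rbar), ∀ s ∈ S, ∃ s' ∈ S, ∃ r' : Rbar, ψ s' * rb = r' * ψ s) ∧
    (∀ (rb : Rbar), ∀ s ∈ S, rb * ψ s = 0 → ∃ t ∈ S, ψ t * rb = 0) := by
  constructor
  · intro rb s hs
    obtain ⟨r, rfl⟩ := hψsurj rb
    obtain ⟨s', hs', r', h⟩ := hOre r s hs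
    exact ⟨s', hs', ψ r', by rw [← map_mul, h, map_mul]⟩
  · intro rb s hs hzero
    obtain ⟨r, rfl⟩ := hψsurj rb
    have ha : r * s ∈ I := by rw [← hψker]; rw [← map_mul] at hzero; exact hzero
    -- In Q', φ a ∈ S⁻¹I, so (φ a) * (φ s)⁻¹ ∈ S⁻¹I
    obtain ⟨u, hu⟩ := hunit s hs
    obtain ⟨s₁, hs₁, a₁, ha₁, heq⟩ := hSI (φ (r * s))
      ⟨1, S.one_mem, r * s, ha, by simp⟩ (↑u⁻¹)
    -- φ s₁ * (φ(r*s) * (φ s)⁻¹) = φ a₁, multiply right by φ s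
    have hus : (↑u⁻¹ : Q') * φ s = 1 := by
      rw [← hu]; exact u.inv_mul
    have h2 : φ (s₁ * r) * φ s = φ a₁ * φ s := by
      have := congrArg (· * φ s) heq
      simp only [mul_assoc] at this ⊢
      simp only [hus, mul_one, map_mul] at this
      simp only [map_mul, mul_assoc]
      exact this
    have h3 : φ (s₁ * r - a₁) = 0 := by
      have : φ (s₁ * r) = φ a₁ := (hu ▸ u.isUnit).mul_right_cancel h2
      rw [map_sub, this, sub_self]
    obtain ⟨t₀, ht₀, ht₀eq⟩ := (hker _).mp h3
    refine ⟨t₀ * s₁, S.mul_mem ht₀ hs₁, ?_⟩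
    rw [← map_mul, hψker]
    have : t₀ * s₁ * r = t₀ * a₁ := by
      have h : t₀ * (s₁ * r) - t₀ * a₁ = 0 := by rw [← mul_sub]; exact ht₀eq
      rw [mul_assoc]; exact sub_eq_zero.mp h
    rw [this]
    exact I.smul_mem t₀ ha₁
end

section
/- Let R be a semiprime ring. Then the classical left quotient ring Q(R) = C^{-1}R exists and is left Noetherian if and only if R is a semiprime left Goldie ring, in which case Q(R) is semisimple (Artinian). -/
universe u

namespace Stmt18

open Submodule Function

variable {R : Type u} [Ring R]

/-- ACC on left annihilators, in the chain form of the statement. -/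
def ACCA (R : Type u) [Ring R] : Prop :=
  ∀ f : ℕ → Set R,
    (∀ n : ℕ, ∃ X : Set R, f n = {q : R | ∀ a ∈ X, q * a = 0}) →
    Monotone f → ∃ n : ℕ, ∀ m : ℕ, n ≤ m → f m = f n

/-- no infinite independent families of nonzero left ideals -/
def NoIndep (R : Type u) [Ring R] : Prop :=
  ¬ ∃ g : ℕ → Ideal R, (∀ n, g n ≠ ⊥) ∧ iSupIndep g

def SP (R : Type u) [Ring R] : Prop := ∀ a : R, (∀ x : R, a * x * a = 0) → a = 0

/-- left annihilator of an element, as a set -/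
def lann (a : R) : Set R := {q | q * a = 0}

lemma lann_form (a : R) : lann a = {q : R | ∀ b ∈ ({a} : Set R), q * b = 0} := by
  ext q; simp [lann]

lemma mem_lann {a q : R} : q ∈ lann a ↔ q * a = 0 := Iff.rfl

/-- maximal elements for left annihilators over a nonempty set of elements -/
lemma exists_max (hacc : ACCA R) (T : Set R) (hT : T.Nonempty) :
    ∃ a ∈ T, ∀ b ∈ T, lann a ⊆ lann b → lann b = lann a := by
  by_contra h
  push_neg at h
  -- every element has a strictly bigger annihilator in T
  have step : ∀ x : {a // a ∈ T}, ∃ y : {a // a ∈ T},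
      lann x.1 ⊆ lann y.1 ∧ lann y.1 ≠ lann x.1 := by
    rintro ⟨a, ha⟩
    obtain ⟨b, hb, h1, h2⟩ := h a ha
    exact ⟨⟨b, hb⟩, h1, h2⟩
  choose F hF1 hF2 using step
  obtain ⟨a₀, ha₀⟩ := hT
  let seq : ℕ → {a // a ∈ T} := fun n => F^[n] ⟨a₀, ha₀⟩
  have hseq : ∀ n, seq (n + 1) = F (seq n) := fun n => Function.iterate_succ_apply' F n _
  have hmono : Monotone fun n => lann (seq n).1 :=
    monotone_nat_of_le_succ (fun n => by rw [hseq]; exact hF1 (seq n))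
  obtain ⟨n, hn⟩ := hacc (fun n => lann (seq n).1)
    (fun n => ⟨{(seq n).1}, lann_form _⟩) hmono
  have := hn (n + 1) (Nat.le_succ n)
  rw [hseq] at this
  exact hF2 (seq n) this

/-- stabilization of annihilators of powers -/
lemma exists_pow_stab (hacc : ACCA R) (b : R) :
    ∃ n : ℕ, 1 ≤ n ∧ ∀ z : R, z * (b ^ n * b ^ n) = 0 → z * b ^ n = 0 := by
  have hmono : Monotone fun k => lann (b ^ (k + 1)) := by
    apply monotone_nat_of_le_succ
    intro k z hz
    have : z * b ^ (k + 1 + 1) = z * b ^ (k + 1) * b := by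
      rw [pow_succ, mul_assoc]
    simp only [mem_lann] at hz ⊢
    rw [this, hz, zero_mul]
  obtain ⟨n, hn⟩ := hacc (fun k => lann (b ^ (k + 1)))
    (fun k => ⟨{b ^ (k + 1)}, lann_form _⟩) hmono
  refine ⟨n + 1, Nat.le_add_left 1 n, ?_⟩
  intro z hz
  have h2 : z ∈ lann (b ^ (n + 1 + n + 1)) := by
    rw [mem_lann]
    have : b ^ (n + 1 + n + 1) = b ^ (n + 1) * b ^ (n + 1) := by
      rw [← pow_add]; ring_nf
    rw [this]; exact hz
  have := hn (n + n + 1) (by omega)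
  have h3 : z ∈ lann (b ^ (n + n + 1 + 1)) := by
    have : n + n + 1 + 1 = n + 1 + n + 1 := by omega
    rw [this]; exact h2
  rw [this] at h3
  rw [mem_lann] at h3
  -- z * b^(n+1) = 0
  exact h3

/-- Essential left ideal -/
def Ess (E : Ideal R) : Prop := ∀ L : Ideal R, E ⊓ L = ⊥ → L = ⊥

lemma Ess.mono {E E' : Ideal R} (hE : Ess E) (h : E ≤ E') : Ess E' := by
  intro L hL
  exact hE L (le_bot_iff.mp (le_trans (inf_le_inf_right L h) hL.le))

lemma Ess.elem {E : Ideal R} (hE : Ess E) {x : R} (hx : x ≠ 0) :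
    ∃ r : R, r * x ∈ E ∧ r * x ≠ 0 := by
  have hL : Submodule.span R {x} ≠ ⊥ := by
    simp [Submodule.span_singleton_eq_bot, hx]
  have h2 : E ⊓ Submodule.span R {x} ≠ ⊥ := fun h => hL (hE _ h)
  obtain ⟨y, hy, hy0⟩ := Submodule.exists_mem_ne_zero_of_ne_bot h2
  obtain ⟨r, hr⟩ := Submodule.mem_span_singleton.mp hy.2
  rw [smul_eq_mul] at hr
  exact ⟨r, by rw [hr]; exact hy.1, by rw [hr]; exact hy0⟩

/-- the linear map of right multiplication by x -/
noncomputable def rmul (x : R) : R →ₗ[R] R := LinearMap.toSpanSingleton R R x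

@[simp] lemma rmul_apply (x r : R) : rmul x r = r * x := by
  simp [rmul, LinearMap.toSpanSingleton_apply, smul_eq_mul]

/-- left annihilator as an ideal -/
noncomputable def lannI (a : R) : Ideal R := LinearMap.ker (rmul a)

lemma mem_lannI {a q : R} : q ∈ lannI a ↔ q * a = 0 := by
  simp [lannI, LinearMap.mem_ker]

/-- preimage of essential under right multiplication is essential -/
lemma Ess.comap_rmul {E : Ideal R} (hE : Ess E) (x : R) :
    Ess (Submodule.comap (rmul x) E) := by
  intro L hL
  rw [Submodule.eq_bot_iff]
  intro y hy
  by_contra hy0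
  rcases eq_or_ne (y * x) 0 with h | h
  · have : y ∈ Submodule.comap (rmul x) E ⊓ L := ⟨by simp [Submodule.mem_comap, h], hy⟩
    rw [hL] at this
    exact hy0 this
  · obtain ⟨r, hr1, hr2⟩ := hE.elem h
    have hmem : r * y ∈ Submodule.comap (rmul x) E ⊓ L := by
      constructor
      · show rmul x (r * y) ∈ E
        rw [rmul_apply, mul_assoc]; exact hr1
      · exact L.smul_mem r hy
    rw [hL] at hmem
    apply hr2
    rw [← mul_assoc, hmem, zero_mul]

lemma ess_lannI_mul {a : R} (h : Ess (lannI a)) (v : R) : Ess (lannI (v * a)) := by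
  have h1 : Ess (Submodule.comap (rmul v) (lannI a)) := h.comap_rmul v
  apply h1.mono
  intro q hq
  simp only [Submodule.mem_comap, rmul_apply, mem_lannI] at hq ⊢
  rw [← mul_assoc]; exact hq

/-- The left singular ideal is zero: semiprime + ACC on left annihilators. -/
lemma singular_eq_zero (hsp : SP R) (hacc : ACCA R) :
    ∀ z : R, Ess (lannI z) → z = 0 := by
  intro z hz
  by_contra hz0
  set T : Set R := {a | a ≠ 0 ∧ Ess (lannI a)} with hT
  obtain ⟨a, haT, hamax⟩ := exists_max hacc T ⟨z, hz0, hz⟩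
  obtain ⟨ha0, haE⟩ := haT
  -- semiprime: ∃ x, a * x * a ≠ 0
  have : ¬ (∀ x : R, a * x * a = 0) := fun h => ha0 (hsp a h)
  push_neg at this
  obtain ⟨x, hx⟩ := this
  have hxa : x * a ≠ 0 := by
    intro h
    apply hx
    rw [mul_assoc, h, mul_zero]
  have hwT : (a * x * a) ∈ T := by
    refine ⟨hx, ?_⟩
    exact ess_lannI_mul haE (a * x)
  have hsub : lann a ⊆ lann (a * x * a) := by
    intro q hq
    rw [mem_lann] at hq ⊢
    rw [show a * x * a = a * (x * a) by rw [mul_assoc], ← mul_assoc, hq, zero_mul]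
  have heq : lann (a * x * a) = lann a := hamax _ hwT hsub
  -- lannI (x*a) is essential
  have hxaE : Ess (lannI (x * a)) := ess_lannI_mul haE x
  obtain ⟨r, hr1, hr2⟩ := hxaE.elem ha0
  rw [mem_lannI] at hr1
  -- (r * a) * (x * a) = 0, hence r ∈ lann (a*x*a) = lann a
  have : r ∈ lann (a * x * a) := by
    rw [mem_lann]
    have e : r * (a * x * a) = r * a * (x * a) := by
      rw [mul_assoc a x a, ← mul_assoc r a (x*a)]
    rw [e]; exact hr1
  rw [heq, mem_lann] at this
  exact hr2 (by rw [this])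

/-- identity: (m*x)^(k+1) = m * (x * (m*x)^k) -/
lemma mulpow (m x : R) (k : ℕ) : (m * x) ^ (k + 1) = m * (x * (m * x) ^ k) := by
  rw [pow_succ']; rw [mul_assoc]

/-- identity: (u*x)^(n+1) = u * ((x*u)^n * x) -/
lemma mulpow2 (hu hx : R) (n : ℕ) : (hu * hx) ^ (n + 1) = hu * ((hx * hu) ^ n * hx) := by
  induction n with
  | zero => simp
  | succ n ih =>
    rw [pow_succ, ih, pow_succ]
    noncomm_ring

/-- semiprime + ACC: if aR is nil then a = 0 -/
lemma no_nil (hsp : SP R) (hacc : ACCA R) (a : R)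
    (h : ∀ x : R, ∃ n : ℕ, (a * x) ^ (n + 1) = 0) : a = 0 := by
  by_contra ha0
  set T : Set R := {m | m ≠ 0 ∧ ∃ y, m = a * y} with hT
  have hTn : T.Nonempty := ⟨a, ha0, 1, (mul_one a).symm⟩
  obtain ⟨m, ⟨hm0, y, hy⟩, hmax⟩ := exists_max hacc T hTn
  -- semiprime gives x with m*x*m ≠ 0
  have : ¬ (∀ x : R, m * x * m = 0) := fun hh => hm0 (hsp m hh)
  push_neg at this
  obtain ⟨x, hx⟩ := this
  have hmx0 : m * x ≠ 0 := by
    intro hh; apply hx; rw [hh, zero_mul]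
  -- m*x is a nilpotent element of aR
  have hnil : ∃ n : ℕ, (m * x) ^ (n + 1) = 0 := by
    obtain ⟨n, hn⟩ := h (y * x)
    refine ⟨n, ?_⟩
    rw [hy, mul_assoc]
    exact hn
  classical
  -- minimal exponent
  let k := Nat.find hnil
  have hk1 : (m * x) ^ (k + 1) = 0 := Nat.find_spec hnil
  have hkmin : ∀ j < k, (m * x) ^ (j + 1) ≠ 0 := fun j hj => Nat.find_min hnil hj
  have hkpos : 1 ≤ k := by
    rcases Nat.eq_zero_or_pos k with h0 | h1
    · exfalso; apply hmx0; have := hk1; rw [h0] at this; simpa using this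
    · exact h1
  have hbne : (m * x) ^ k ≠ 0 := by
    have := hkmin (k - 1) (by omega)
    have e : k - 1 + 1 = k := by omega
    rwa [e] at this
  set b := (m * x) ^ k with hb
  have e : k = (k - 1) + 1 := by omega
  have hbrep : b = m * (x * (m * x) ^ (k - 1)) := by
    conv_lhs => rw [hb, e]
    exact mulpow m x (k - 1)
  have hbT : b ∈ T := by
    refine ⟨hbne, y * (x * (m * x) ^ (k - 1)), ?_⟩
    rw [hbrep, hy, mul_assoc]
  have hsub : lann m ⊆ lann b := by
    intro z hz
    rw [mem_lann] at hz ⊢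
    rw [hbrep, ← mul_assoc, hz, zero_mul]
  have heq : lann b = lann m := hmax b hbT hsub
  have : (m * x) ∈ lann b := by
    rw [mem_lann, hb, ← pow_succ']
    exact hk1
  rw [heq, mem_lann] at this
  exact hx this

/-- semiprime + ACC: every nonzero left ideal contains a "good" element:
a ≠ 0 with ℓ(a²)=ℓ(a) -/
lemma exists_good (hsp : SP R) (hacc : ACCA R) (J : Ideal R) (hJ : J ≠ ⊥) :
    ∃ a, a ∈ J ∧ a ≠ 0 ∧ ∀ z : R, z * (a * a) = 0 → z * a = 0 := by
  obtain ⟨u, hu, hu0⟩ := Submodule.exists_mem_ne_zero_of_ne_bot hJ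
  -- find a non-nilpotent element of J
  have hexists : ∃ b ∈ J, ∀ n : ℕ, b ^ (n + 1) ≠ 0 := by
    by_contra hall
    push_neg at hall
    apply hu0
    apply no_nil hsp hacc u
    intro x
    obtain ⟨n, hn⟩ := hall (x * u) (J.smul_mem x hu)
    refine ⟨n + 1, ?_⟩
    rw [mulpow2, hn, zero_mul, mul_zero]
  obtain ⟨b, hbJ, hbn⟩ := hexists
  obtain ⟨n, hn1, hn⟩ := exists_pow_stab hacc b
  refine ⟨b ^ n, ?_, ?_, hn⟩
  · have e : n = (n - 1) + 1 := by omega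
    rw [e, pow_succ]
    exact J.smul_mem _ hbJ
  · have e : n = (n - 1) + 1 := by omega
    rw [e]; exact hbn (n - 1)

/-- relation splitting for a "triangular" family with good elements -/
lemma rel_split {a : ℕ → R}
    (hK : ∀ i, ∀ z : R, z * (a i * a i) = 0 → z * a i = 0)
    (horth : ∀ i j, i < j → a j * a i = 0) :
    ∀ (F : Finset ℕ) (r : ℕ → R), (∑ i ∈ F, r i * a i) = 0 → ∀ i ∈ F, r i * a i = 0 := by
  classical
  intro F
  induction F using Finset.strongInduction with
  | _ F ih =>
    intro r hsum i hi
    have hFne : F.Nonempty := ⟨i, hi⟩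
    set i₀ := F.min' hFne with hi₀
    have hi₀F : i₀ ∈ F := F.min'_mem hFne
    -- multiply the relation on the right by a i₀
    have h1 : (∑ j ∈ F, r j * a j) * a i₀ = 0 := by rw [hsum, zero_mul]
    rw [Finset.sum_mul] at h1
    have h2 : ∀ j ∈ F, j ≠ i₀ → r j * a j * a i₀ = 0 := by
      intro j hj hne
      have : i₀ < j := lt_of_le_of_ne (F.min'_le j hj) (Ne.symm hne)
      rw [mul_assoc, horth i₀ j this, mul_zero]
    rw [Finset.sum_eq_single_of_mem i₀ hi₀F (fun j hj hne => h2 j hj hne)] at h1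
    have h3 : r i₀ * a i₀ = 0 := by
      apply hK i₀
      rw [← mul_assoc]; exact h1
    -- now the remaining relation on F.erase i₀
    have hrest : (∑ j ∈ F.erase i₀, r j * a j) = 0 := by
      have h4 : r i₀ * a i₀ + ∑ j ∈ F.erase i₀, r j * a j = ∑ j ∈ F, r j * a j :=
        Finset.add_sum_erase F (fun j => r j * a j) hi₀F
      rw [← h4, h3, zero_add] at hsum
      exact hsum
    rcases eq_or_ne i i₀ with rfl | hne
    · exact h3
    · exact ih (F.erase i₀) (Finset.erase_ssubset hi₀F) r hrest i
        (Finset.mem_erase.mpr ⟨hne, hi⟩)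

/-- master lemma: splitting of finite relations implies iSupIndep -/
lemma iSupIndep_of_split (g : ℕ → Ideal R)
    (hsplit : ∀ (F : Finset ℕ) (y : ℕ → R), (∀ i ∈ F, y i ∈ g i) →
      (∑ i ∈ F, y i) = 0 → ∀ i ∈ F, y i = 0) :
    iSupIndep g := by
  classical
  intro i
  rw [disjoint_iff]
  rw [Submodule.eq_bot_iff]
  rintro x ⟨hx1, hx2⟩
  have e : (⨆ j, ⨆ (_ : j ≠ i), g j) = ⨆ j : {j // j ≠ i}, g j.1 := by
    rw [iSup_subtype]
  rw [e] at hx2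
  have hx2' : x ∈ (⨆ j : {j // j ≠ i}, g j.1) := hx2
  rw [Submodule.mem_iSup_iff_exists_finsupp] at hx2'
  obtain ⟨f, hf, hfs⟩ := hx2'
  set F : Finset ℕ := Finset.image Subtype.val f.support ∪ {i} with hF
  set y : ℕ → R := fun j => if hj : j = i then -x else f ⟨j, hj⟩ with hy
  have hiF : i ∉ Finset.image Subtype.val f.support := by
    simp only [Finset.mem_image]
    rintro ⟨⟨j, hj⟩, _, hji⟩
    exact hj hji
  have hmem : ∀ j ∈ F, y j ∈ g j := by
    intro j hj
    rcases eq_or_ne j i with rfl | hne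
    · simp only [hy, dif_pos rfl]
      exact (g j).neg_mem hx1
    · simp only [hy, dif_neg hne]
      exact hf ⟨j, hne⟩
  have hsum : (∑ j ∈ F, y j) = 0 := by
    rw [hF, Finset.sum_union (by simp [Finset.disjoint_singleton_right, hiF])]
    rw [Finset.sum_singleton]
    have e1 : (∑ j ∈ Finset.image Subtype.val f.support, y j)
        = ∑ s ∈ f.support, y s.1 := by
      rw [Finset.sum_image]
      intro p _ q _ h
      exact Subtype.ext h
    have e2 : ∀ s ∈ f.support, y s.1 = f s := by
      rintro ⟨j, hj⟩ _
      simp only [hy, dif_neg hj]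
    rw [e1, Finset.sum_congr rfl e2]
    have : (f.sum fun _ xi => xi) = ∑ s ∈ f.support, f s := rfl
    rw [← this, hfs]
    simp only [hy, dif_pos rfl]
    exact add_neg_cancel x
  have := hsplit F y hmem hsum i (by simp [hF])
  simp only [hy, dif_pos rfl, neg_eq_zero] at this
  exact this

lemma creg_pow {c : R} (hc : ∀ z : R, z * c = 0 → z = 0) :
    ∀ (n : ℕ) (z : R), z * c ^ n = 0 → z = 0 := by
  intro n
  induction n with
  | zero => intro z hz; simpa using hz
  | succ n ih =>
    intro z hz
    rw [pow_succ, ← mul_assoc] at hz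
    exact ih _ (hc _ hz)

/-- if c is right-regular then Rc is an essential left ideal (uses finite udim) -/
lemma span_essential (hdim : NoIndep R) {c : R} (hc : ∀ z : R, z * c = 0 → z = 0) :
    Ess (Submodule.span R {c}) := by
  intro L hL
  by_contra hL0
  obtain ⟨x₀, hx₀L, hx₀⟩ := Submodule.exists_mem_ne_zero_of_ne_bot hL0
  apply hdim
  refine ⟨fun i => Submodule.map (rmul (c ^ i)) L, ?_, ?_⟩
  · intro n
    intro hbot
    apply hx₀
    have h1 : x₀ * c ^ n ∈ Submodule.map (rmul (c ^ n)) L :=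
      ⟨x₀, hx₀L, by rw [rmul_apply]⟩
    have hbot' : Submodule.map (rmul (c ^ n)) L = ⊥ := hbot
    rw [hbot'] at h1
    exact creg_pow hc n x₀ h1
  · apply iSupIndep_of_split
    -- splitting lemma for ∑ xᵢ c^i
    have key : ∀ (F : Finset ℕ) (x : ℕ → R), (∀ i ∈ F, x i ∈ L) →
        (∑ i ∈ F, x i * c ^ i) = 0 → ∀ i ∈ F, x i = 0 := by
      classical
      intro F
      induction F using Finset.strongInduction with
      | _ F ih =>
        intro x hxL hsum i hi
        have hFne : F.Nonempty := ⟨i, hi⟩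
        set i₀ := F.min' hFne with hi₀def
        have hi₀F : i₀ ∈ F := F.min'_mem hFne
        have hfac : ∀ j ∈ F, x j * c ^ j = (x j * c ^ (j - i₀)) * c ^ i₀ := by
          intro j hj
          have hle : i₀ ≤ j := F.min'_le j hj
          rw [mul_assoc, ← pow_add, Nat.sub_add_cancel hle]
        have h1 : (∑ j ∈ F, x j * c ^ (j - i₀)) * c ^ i₀ = 0 := by
          rw [Finset.sum_mul, ← hsum]
          exact Finset.sum_congr rfl (fun j hj => (hfac j hj).symm)
        have h2 : (∑ j ∈ F, x j * c ^ (j - i₀)) = 0 := creg_pow hc i₀ _ h1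
        -- the i₀ term is x i₀, the rest lies in span {c}
        have h3 : x i₀ + ∑ j ∈ F.erase i₀, x j * c ^ (j - i₀) = 0 := by
          have h4 : x i₀ * c ^ (i₀ - i₀) + ∑ j ∈ F.erase i₀, x j * c ^ (j - i₀)
              = ∑ j ∈ F, x j * c ^ (j - i₀) :=
            Finset.add_sum_erase F (fun j => x j * c ^ (j - i₀)) hi₀F
          rw [Nat.sub_self, pow_zero, mul_one] at h4
          rw [h4]; exact h2
        have h5 : x i₀ ∈ Submodule.span R {c} := by
          have : x i₀ = -∑ j ∈ F.erase i₀, x j * c ^ (j - i₀) :=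
            eq_neg_of_add_eq_zero_left h3
          rw [this]
          apply Submodule.neg_mem
          apply Submodule.sum_mem
          intro j hj
          have hjF := Finset.mem_of_mem_erase hj
          have hjne : j ≠ i₀ := Finset.ne_of_mem_erase hj
          have hjgt : i₀ < j := lt_of_le_of_ne (F.min'_le j hjF) (Ne.symm hjne)
          have e : j - i₀ = (j - i₀ - 1) + 1 := by omega
          rw [e, pow_succ, ← mul_assoc]
          exact Submodule.mem_span_singleton.mpr ⟨x j * c ^ (j - i₀ - 1), rfl⟩
        have h6 : x i₀ ∈ Submodule.span R {c} ⊓ L := ⟨h5, hxL i₀ hi₀F⟩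
        rw [hL] at h6
        have hxi₀ : x i₀ = 0 := h6
        rcases eq_or_ne i i₀ with rfl | hne
        · exact hxi₀
        · -- remove i₀ and recurse
          have hrest : (∑ j ∈ F.erase i₀, x j * c ^ j) = 0 := by
            have h4 : x i₀ * c ^ i₀ + ∑ j ∈ F.erase i₀, x j * c ^ j
                = ∑ j ∈ F, x j * c ^ j :=
              Finset.add_sum_erase F (fun j => x j * c ^ j) hi₀F
            rw [hxi₀, zero_mul, zero_add] at h4
            rw [h4]; exact hsum
          exact ih (F.erase i₀) (Finset.erase_ssubset hi₀F) x
            (fun j hj => hxL j (Finset.mem_of_mem_erase hj)) hrest i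
            (Finset.mem_erase.mpr ⟨hne, hi⟩)
    intro F y hy hsum i hi
    -- choose preimages
    have hrep : ∀ j ∈ F, ∃ x, x ∈ L ∧ x * c ^ j = y j := by
      intro j hj
      obtain ⟨x, hxL, hx⟩ := Submodule.mem_map.mp (hy j hj)
      exact ⟨x, hxL, by rw [← hx, rmul_apply]⟩
    classical
    choose! x hxL hxc using hrep
    have hsum' : (∑ j ∈ F, x j * c ^ j) = 0 := by
      rw [Finset.sum_congr rfl (fun j hj => hxc j hj)]
      exact hsum
    have := key F x hxL hsum' i hi
    rw [← hxc i hi, this, zero_mul]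

/-- every essential left ideal contains a right-regular element -/
lemma ess_exists_lreg (hsp : SP R) (hacc : ACCA R) (hdim : NoIndep R)
    {E : Ideal R} (hE : Ess E) : ∃ c ∈ E, ∀ z : R, z * c = 0 → z = 0 := by
  by_contra hno
  push_neg at hno
  classical
  set Good : R → Prop :=
    fun a => a ∈ E ∧ a ≠ 0 ∧ ∀ z : R, z * (a * a) = 0 → z * a = 0 with hGood
  -- the one-step extension
  have step : ∀ (n : ℕ) (aa : ℕ → R), (∀ i, i < n → Good (aa i)) →
      (∀ i j, i < j → j < n → aa j * aa i = 0) →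
      ∃ x, Good x ∧ ∀ i, i < n → x * aa i = 0 := by
    intro n aa hGd horth
    set c : R := ∑ i ∈ Finset.range n, aa i with hc
    have hcE : c ∈ E := Submodule.sum_mem _ (fun i hi => (hGd i (Finset.mem_range.mp hi)).1)
    obtain ⟨z, hzc, hz0⟩ := hno c hcE
    have hlann : lannI c ≠ ⊥ := by
      intro h
      apply hz0
      have : z ∈ lannI c := mem_lannI.mpr hzc
      rw [h] at this
      exact this
    have hJ : E ⊓ lannI c ≠ ⊥ := by
      intro h
      exact hlann (hE _ (by rw [← h]))
    obtain ⟨x, hxJ, hx0, hxK⟩ := exists_good hsp hacc _ hJ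
    have hxE : x ∈ E := hxJ.1
    have hxc : x * c = 0 := mem_lannI.mp hxJ.2
    refine ⟨x, ⟨hxE, hx0, hxK⟩, ?_⟩
    -- split x * c = ∑ x * aa i into pieces
    set aa' : ℕ → R := fun m => if m < n then aa m else 0 with haa'
    have hK' : ∀ i, ∀ z : R, z * (aa' i * aa' i) = 0 → z * aa' i = 0 := by
      intro i z hz
      by_cases hi : i < n
      · simp only [haa', if_pos hi] at hz ⊢
        exact (hGd i hi).2.2 z hz
      · simp only [haa', if_neg hi, mul_zero]
    have horth' : ∀ i j, i < j → aa' j * aa' i = 0 := by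
      intro i j hij
      by_cases hj : j < n
      · have hi : i < n := lt_trans hij hj
        simp only [haa', if_pos hi, if_pos hj]
        exact horth i j hij hj
      · simp only [haa', if_neg hj, zero_mul]
    have hsum : (∑ i ∈ Finset.range n, x * aa' i) = 0 := by
      have e : ∀ i ∈ Finset.range n, x * aa' i = x * aa i := by
        intro i hi
        rw [haa']
        simp [Finset.mem_range.mp hi]
      rw [Finset.sum_congr rfl e, ← Finset.mul_sum, ← hc, hxc]
    have := rel_split hK' horth' (Finset.range n) (fun _ => x) hsum
    intro i hi
    have h2 := this i (Finset.mem_range.mpr hi)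
    simpa only [haa', if_pos hi] using h2
  -- dependent choice: build an infinite sequence
  set σ := ℕ × (ℕ → R) with hσ
  set Ch : σ → Prop := fun p =>
    (∀ i, i < p.1 → Good (p.2 i)) ∧ (∀ i j, i < j → j < p.1 → p.2 j * p.2 i = 0) with hCh
  have stepσ : ∀ p : σ, Ch p → ∃ x, Good x ∧ ∀ i, i < p.1 → x * p.2 i = 0 :=
    fun p hp => step p.1 p.2 hp.1 hp.2
  set T : σ → σ := fun p =>
    if h : Ch p then
      (p.1 + 1, fun i => if i < p.1 then p.2 i else Classical.choose (stepσ p h))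
    else p with hT
  set s : ℕ → σ := fun k => T^[k] (0, fun _ => (0 : R)) with hs
  have hs0 : s 0 = (0, fun _ => (0 : R)) := rfl
  have hssucc : ∀ k, s (k + 1) = T (s k) := fun k => Function.iterate_succ_apply' T k _
  have hinv : ∀ k, Ch (s k) ∧ (s k).1 = k := by
    intro k
    induction k with
    | zero =>
      have h0 : (s 0).1 = 0 := rfl
      refine ⟨⟨?_, ?_⟩, rfl⟩
      · intro i hi; rw [h0] at hi; exact absurd hi (by omega)
      · intro i j hij hj; rw [h0] at hj; exact absurd hj (by omega)
    | succ k ih =>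
      obtain ⟨hch, hlen⟩ := ih
      have hTk : s (k + 1) = (k + 1, fun i =>
          if i < (s k).1 then (s k).2 i else Classical.choose (stepσ (s k) hch)) := by
        rw [hssucc, hT]
        simp only [dif_pos hch, hlen]
      obtain ⟨hx1, hx2⟩ := Classical.choose_spec (stepσ (s k) hch)
      constructor
      · constructor
        · intro i hi
          rw [hTk]
          simp only
          by_cases hik : i < (s k).1
          · rw [if_pos hik]
            exact hch.1 i hik
          · rw [if_neg hik]
            exact hx1
        · intro i j hij hj
          rw [hTk]
          simp only
          rw [hTk] at hj
          simp only at hj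
          have hjk : j < k + 1 := hj
          have hik : i < (s k).1 := by omega
          rw [if_pos hik]
          by_cases hjk' : j < (s k).1
          · rw [if_pos hjk']
            exact hch.2 i j hij hjk'
          · rw [if_neg hjk']
            exact hx2 i hik
      · rw [hTk]
  have hcoh : ∀ k i, i < k → (s (k + 1)).2 i = (s k).2 i := by
    intro k i hik
    obtain ⟨hch, hlen⟩ := hinv k
    rw [hssucc, hT]
    simp only [dif_pos hch]
    rw [if_pos (by omega : i < (s k).1)]
  have hcoh2 : ∀ k m, k ≤ m → ∀ i, i < k → (s m).2 i = (s k).2 i := by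
    intro k m hkm
    induction m with
    | zero =>
      intro i hi
      have : k = 0 := by omega
      rw [this]
    | succ m ihm =>
      intro i hi
      rcases Nat.lt_or_ge k (m + 1) with h | h
      · have hkm' : k ≤ m := by omega
        rw [hcoh m i (by omega), ihm hkm' i hi]
      · have : k = m + 1 := by omega
        rw [this]
  set a : ℕ → R := fun i => (s (i + 1)).2 i with ha
  have hGa : ∀ i, Good (a i) := by
    intro i
    obtain ⟨hch, hlen⟩ := hinv (i + 1)
    exact hch.1 i (by omega)
  have horth : ∀ m n, m < n → a n * a m = 0 := by
    intro m n hmn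
    obtain ⟨hch, hlen⟩ := hinv (n + 1)
    have h1 : (s (n + 1)).2 n * (s (n + 1)).2 m = 0 :=
      hch.2 m n hmn (by omega)
    have h2 : (s (n + 1)).2 m = a m := by
      rw [ha]
      simp only
      exact hcoh2 (m + 1) (n + 1) (by omega) m (by omega)
    rw [← h2]
    exact h1
  -- contradiction with finite uniform dimension
  apply hdim
  refine ⟨fun i => Submodule.span R {a i}, ?_, ?_⟩
  · intro n h
    apply (hGa n).2.1
    rw [Submodule.span_singleton_eq_bot] at h
    exact h
  · apply iSupIndep_of_split
    intro F y hy hsum i hi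
    have hrep : ∀ j ∈ F, ∃ r : R, r * a j = y j := by
      intro j hj
      obtain ⟨r, hr⟩ := Submodule.mem_span_singleton.mp (hy j hj)
      exact ⟨r, by rw [← hr, smul_eq_mul]⟩
    classical
    choose! r hr using hrep
    have hsum' : (∑ j ∈ F, r j * a j) = 0 := by
      rw [Finset.sum_congr rfl (fun j hj => hr j hj)]
      exact hsum
    have := rel_split (fun i => (hGa i).2.2) horth F r hsum' i hi
    rw [← hr i hi]
    exact this

/-- every essential left ideal contains a regular element -/
lemma ess_imp_regular (hsp : SP R) (hacc : ACCA R) (hdim : NoIndep R)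
    {E : Ideal R} (hE : Ess E) : ∃ c ∈ E, IsRegular c := by
  obtain ⟨c, hcE, hc⟩ := ess_exists_lreg hsp hacc hdim hE
  have hspan : Ess (Submodule.span R {c}) := span_essential hdim hc
  have hrc : ∀ x : R, c * x = 0 → x = 0 := by
    intro x hx
    apply singular_eq_zero hsp hacc
    apply hspan.mono
    intro z hz
    obtain ⟨r, hr⟩ := Submodule.mem_span_singleton.mp hz
    rw [mem_lannI, ← hr, smul_eq_mul, mul_assoc, hx, mul_zero]
  refine ⟨c, hcE, ?_, ?_⟩
  · intro u v huv
    have : c * (u - v) = 0 := by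
      simp only [mul_sub]
      rw [sub_eq_zero]
      exact huv
    have := hrc _ this
    rwa [sub_eq_zero] at this
  · intro u v huv
    have : (u - v) * c = 0 := by
      simp only [sub_mul]
      rw [sub_eq_zero]
      exact huv
    have := hc _ this
    rwa [sub_eq_zero] at this

/-- the left Ore condition -/
lemma ore_exists (hsp : SP R) (hacc : ACCA R) (hdim : NoIndep R) :
    ∀ r c : R, IsRegular c → ∃ c' r' : R, IsRegular c' ∧ c' * r = r' * c := by
  intro r c hcreg
  have hc : ∀ z : R, z * c = 0 → z = 0 := by
    intro z hz
    have := hcreg.right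
    have h2 : z * c = 0 * c := by rw [hz, zero_mul]
    exact hcreg.right h2
  have hspan : Ess (Submodule.span R {c}) := span_essential hdim hc
  have hcomap : Ess (Submodule.comap (rmul r) (Submodule.span R {c})) :=
    hspan.comap_rmul r
  obtain ⟨c', hc'E, hc'reg⟩ := ess_imp_regular hsp hacc hdim hcomap
  have : c' * r ∈ Submodule.span R {c} := by
    have := hc'E
    simpa only [Submodule.mem_comap, rmul_apply] using this
  obtain ⟨r', hr'⟩ := Submodule.mem_span_singleton.mp this
  exact ⟨c', r', hc'reg, by rw [← hr', smul_eq_mul]⟩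


/-- Zorn: complements making essential sums exist, in any ring -/
lemma exists_compl_ess {A : Type*} [Ring A] (I : Ideal A) :
    ∃ I' : Ideal A, I ⊓ I' = ⊥ ∧ ∀ L : Ideal A, (I ⊔ I') ⊓ L = ⊥ → L = ⊥ := by
  classical
  set S : Set (Ideal A) := {J | I ⊓ J = ⊥} with hS
  have hzorn : ∃ I', Maximal (· ∈ S) I' := by
    apply zorn_le₀
    intro c hcS hchain
    rcases Set.eq_empty_or_nonempty c with rfl | hcne
    · exact ⟨⊥, by simp [hS], by simp⟩
    refine ⟨sSup c, ?_, fun z hz => le_sSup hz⟩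
    rw [hS, Set.mem_setOf_eq, Submodule.eq_bot_iff]
    rintro x ⟨hx1, hx2⟩
    obtain ⟨J, hJc, hxJ⟩ := (Submodule.mem_sSup_of_directed hcne
      (hchain.directedOn)).mp hx2
    have : x ∈ I ⊓ J := ⟨hx1, hxJ⟩
    rw [hcS hJc] at this
    exact this
  obtain ⟨I', hI'⟩ := hzorn
  have hI'S : I ⊓ I' = ⊥ := hI'.1
  refine ⟨I', hI'S, ?_⟩
  intro L hL
  -- first: I ⊓ (I' ⊔ L) = ⊥
  have key : I ⊓ (I' ⊔ L) = ⊥ := by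
    rw [Submodule.eq_bot_iff]
    rintro x ⟨hx1, hx2⟩
    obtain ⟨y, hy, l, hl, hyl⟩ := Submodule.mem_sup.mp hx2
    have hlmem : l ∈ (I ⊔ I') ⊓ L := by
      constructor
      · have : l = x - y := by rw [← hyl]; exact (add_sub_cancel_left y l).symm
        rw [this]
        exact Submodule.sub_mem _ (Submodule.mem_sup_left hx1) (Submodule.mem_sup_right hy)
      · exact hl
    rw [hL] at hlmem
    have hl0 : l = 0 := hlmem
    have : x ∈ I ⊓ I' := ⟨hx1, by rw [← hyl, hl0, add_zero]; exact hy⟩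
    rw [hI'S] at this
    exact this
  have hmax := hI'.2 (y := I' ⊔ L) key le_sup_left
  rw [Submodule.eq_bot_iff]
  intro x hx
  have hxI' : x ∈ I' := hmax (Submodule.mem_sup_right hx)
  have : x ∈ (I ⊔ I') ⊓ L := ⟨Submodule.mem_sup_right hxI', hx⟩
  rw [hL] at this
  exact this

section Qside

variable {Q : Type u} [Ring Q]

/-- cancel a regular denominator -/
lemma cancelQ (φ : R →+* Q) (hu : ∀ c : R, IsRegular c → IsUnit (φ c))
    {c : R} (hc : IsRegular c) {q : Q} (h : φ c * q = 0) : q = 0 := by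
  obtain ⟨u, hu'⟩ := hu c hc
  have h2 : (↑u⁻¹ : Q) * (φ c * q) = 0 := by rw [h, mul_zero]
  rw [← hu', ← mul_assoc, Units.inv_mul, one_mul] at h2
  exact h2

/-- the ideal of left fractions with numerator in I -/
def fracI (hore : ∀ r c : R, IsRegular c → ∃ c' r' : R, IsRegular c' ∧ c' * r = r' * c)
    (φ : R →+* Q) (hfrac : ∀ q : Q, ∃ c r : R, IsRegular c ∧ φ c * q = φ r)
    (I : Ideal R) : Ideal Q where
  carrier := {q | ∃ c r : R, IsRegular c ∧ r ∈ I ∧ φ c * q = φ r}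
  zero_mem' := ⟨1, 0, isRegular_one, I.zero_mem, by simp⟩
  add_mem' := by
    rintro x y ⟨c₁, r₁, hc₁, hr₁, e₁⟩ ⟨c₂, r₂, hc₂, hr₂, e₂⟩
    obtain ⟨c', r', hc', he⟩ := hore c₁ c₂ hc₂
    refine ⟨c' * c₁, c' * r₁ + r' * r₂, hc'.mul hc₁, ?_, ?_⟩
    · exact Submodule.add_mem _ (I.smul_mem c' hr₁) (I.smul_mem r' hr₂)
    · rw [mul_add, map_add]
      congr 1
      · rw [map_mul, mul_assoc, e₁, ← map_mul]
      · rw [he, map_mul, mul_assoc, e₂, ← map_mul]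
  smul_mem' := by
    rintro q' x ⟨c, r, hc, hr, e⟩
    obtain ⟨d, s, hd, ed⟩ := hfrac q'
    obtain ⟨e', t', he', het⟩ := hore s c hc
    refine ⟨e' * d, t' * r, he'.mul hd, I.smul_mem t' hr, ?_⟩
    have : φ (e' * d) * (q' * x) = φ e' * (φ d * q') * x := by
      rw [map_mul, mul_assoc, mul_assoc, mul_assoc]
    rw [smul_eq_mul, this, ed, ← map_mul, het, map_mul, mul_assoc, e, ← map_mul]

lemma mem_fracI {hore : ∀ r c : R, IsRegular c → ∃ c' r' : R, IsRegular c' ∧ c' * r = r' * c}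
    {φ : R →+* Q} {hfrac : ∀ q : Q, ∃ c r : R, IsRegular c ∧ φ c * q = φ r}
    {I : Ideal R} {q : Q} :
    q ∈ fracI hore φ hfrac I ↔ ∃ c r : R, IsRegular c ∧ r ∈ I ∧ φ c * q = φ r :=
  Iff.rfl

lemma fracI_mono {hore : ∀ r c : R, IsRegular c → ∃ c' r' : R, IsRegular c' ∧ c' * r = r' * c}
    {φ : R →+* Q} {hfrac : ∀ q : Q, ∃ c r : R, IsRegular c ∧ φ c * q = φ r}
    {I J : Ideal R} (h : I ≤ J) : fracI hore φ hfrac I ≤ fracI hore φ hfrac J := by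
  rintro q ⟨c, r, hc, hr, e⟩
  exact ⟨c, r, hc, h hr, e⟩

lemma fracI_inf {hore : ∀ r c : R, IsRegular c → ∃ c' r' : R, IsRegular c' ∧ c' * r = r' * c}
    {φ : R →+* Q} {hfrac : ∀ q : Q, ∃ c r : R, IsRegular c ∧ φ c * q = φ r}
    (hinj : Function.Injective φ) (hu : ∀ c : R, IsRegular c → IsUnit (φ c))
    {I I' : Ideal R} (h : I ⊓ I' = ⊥) :
    fracI hore φ hfrac I ⊓ fracI hore φ hfrac I' = ⊥ := by
  rw [Submodule.eq_bot_iff]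
  rintro q ⟨⟨c, r, hc, hr, e⟩, ⟨d, s, hd, hs, f⟩⟩
  obtain ⟨e', t', he', het⟩ := hore d c hc
  have h1 : φ (e' * d) * q = φ (e' * s) := by
    rw [map_mul, mul_assoc, f, ← map_mul]
  have h2 : φ (e' * d) * q = φ (t' * r) := by
    rw [het, map_mul, mul_assoc, e, ← map_mul]
  have h3 : e' * s = t' * r := hinj (h1.symm.trans h2)
  have h4 : t' * r ∈ I ⊓ I' := ⟨I.smul_mem t' hr, by rw [← h3]; exact I'.smul_mem e' hs⟩
  rw [h] at h4
  have h5 : φ (e' * d) * q = 0 := by rw [h2, h4, map_zero]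
  exact cancelQ φ hu (he'.mul hd) h5

lemma fracI_sup_le {hore : ∀ r c : R, IsRegular c → ∃ c' r' : R, IsRegular c' ∧ c' * r = r' * c}
    {φ : R →+* Q} {hfrac : ∀ q : Q, ∃ c r : R, IsRegular c ∧ φ c * q = φ r}
    (hu : ∀ c : R, IsRegular c → IsUnit (φ c)) {I I' : Ideal R} :
    fracI hore φ hfrac (I ⊔ I') ≤ fracI hore φ hfrac I ⊔ fracI hore φ hfrac I' := by
  rintro q ⟨c, r, hc, hr, e⟩
  obtain ⟨y, hy, z, hz, hyz⟩ := Submodule.mem_sup.mp hr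
  obtain ⟨u, hu'⟩ := hu c hc
  have hq : q = ↑u⁻¹ * φ y + ↑u⁻¹ * φ z := by
    have : q = ↑u⁻¹ * (φ c * q) := by rw [← hu', ← mul_assoc, Units.inv_mul, one_mul]
    rw [this, e, ← hyz, map_add, mul_add]
  have hy' : (↑u⁻¹ : Q) * φ y ∈ fracI hore φ hfrac I := by
    refine ⟨c, y, hc, hy, ?_⟩
    rw [← hu', ← mul_assoc, Units.mul_inv, one_mul]
  have hz' : (↑u⁻¹ : Q) * φ z ∈ fracI hore φ hfrac I' := by
    refine ⟨c, z, hc, hz, ?_⟩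
    rw [← hu', ← mul_assoc, Units.mul_inv, one_mul]
  rw [hq]
  exact Submodule.add_mem _ (Submodule.mem_sup_left hy') (Submodule.mem_sup_right hz')

lemma fracI_comap_eq {hore : ∀ r c : R, IsRegular c → ∃ c' r' : R, IsRegular c' ∧ c' * r = r' * c}
    {φ : R →+* Q} {hfrac : ∀ q : Q, ∃ c r : R, IsRegular c ∧ φ c * q = φ r}
    (hu : ∀ c : R, IsRegular c → IsUnit (φ c)) (𝔄 : Ideal Q) :
    fracI hore φ hfrac (Ideal.comap φ 𝔄) = 𝔄 := by
  apply le_antisymm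
  · rintro q ⟨c, r, hc, hr, e⟩
    obtain ⟨u, hu'⟩ := hu c hc
    have hq : q = ↑u⁻¹ * φ r := by
      rw [← e, ← hu', ← mul_assoc, Units.inv_mul, one_mul]
    rw [hq]
    exact 𝔄.smul_mem _ hr
  · intro q hq
    obtain ⟨c, r, hc, e⟩ := hfrac q
    refine ⟨c, r, hc, ?_, e⟩
    rw [Ideal.mem_comap, e.symm]
    exact 𝔄.smul_mem _ hq

lemma fracI_eq_top {hore : ∀ r c : R, IsRegular c → ∃ c' r' : R, IsRegular c' ∧ c' * r = r' * c}
    {φ : R →+* Q} {hfrac : ∀ q : Q, ∃ c r : R, IsRegular c ∧ φ c * q = φ r}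
    {I : Ideal R} {c : R} (hcI : c ∈ I) (hc : IsRegular c) :
    fracI hore φ hfrac I = ⊤ := by
  rw [Submodule.eq_top_iff']
  intro q
  obtain ⟨d, s, hd, e⟩ := hfrac q
  obtain ⟨e', t', he', het⟩ := hore s c hc
  refine ⟨e' * d, t' * c, he'.mul hd, I.smul_mem t' hcI, ?_⟩
  rw [map_mul, mul_assoc, e, ← map_mul, het]

/-- Main theorem, hard direction: semiprime Goldie implies any classical quotient
ring is semisimple -/
theorem semisimple_main (hsp : SP R) (hacc : ACCA R) (hdim : NoIndep R)
    (φ : R →+* Q) (hinj : Function.Injective φ)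
    (hu : ∀ c : R, IsRegular c → IsUnit (φ c))
    (hfrac : ∀ q : Q, ∃ c r : R, IsRegular c ∧ φ c * q = φ r) :
    IsSemisimpleRing Q := by
  have hore := ore_exists hsp hacc hdim
  refine (isSemisimpleModule_iff Q Q).mpr ⟨?_⟩
  intro 𝔄
  obtain ⟨I', hdisj, hess⟩ := exists_compl_ess (Ideal.comap φ 𝔄)
  obtain ⟨c, hcmem, hcreg⟩ := ess_imp_regular hsp hacc hdim hess
  refine ⟨fracI hore φ hfrac I', ?_, ?_⟩
  · rw [disjoint_iff]
    conv_lhs => rw [← fracI_comap_eq (hore := hore) (hfrac := hfrac) hu 𝔄]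
    exact fracI_inf hinj hu hdisj
  · rw [codisjoint_iff]
    apply le_antisymm le_top
    have h1 : fracI hore φ hfrac (Ideal.comap φ 𝔄 ⊔ I') = ⊤ := fracI_eq_top hcmem hcreg
    rw [← h1]
    calc fracI hore φ hfrac (Ideal.comap φ 𝔄 ⊔ I')
        ≤ fracI hore φ hfrac (Ideal.comap φ 𝔄) ⊔ fracI hore φ hfrac I' := fracI_sup_le hu
      _ = 𝔄 ⊔ fracI hore φ hfrac I' := by rw [fracI_comap_eq hu]

end Qside

/-! ### Forward direction: existence of a Noetherian quotient ring implies Goldie -/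

/-- the submonoid of regular elements -/
def regS (R : Type u) [Ring R] : Submonoid R where
  carrier := {c | IsRegular c}
  one_mem' := isRegular_one
  mul_mem' := fun ha hb => ha.mul hb

/-- the Ore set structure on regular elements, from the Ore condition -/
noncomputable def mkOreSet
    (hore : ∀ r c : R, IsRegular c → ∃ c' r' : R, IsRegular c' ∧ c' * r = r' * c) :
    OreLocalization.OreSet (regS R) where
  ore_right_cancel := fun r₁ r₂ s h => ⟨1, by rw [Submonoid.coe_one, one_mul, one_mul]; exact s.2.right h⟩
  oreNum := fun r s => (hore r s.1 s.2).choose_spec.choose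
  oreDenom := fun r s => ⟨(hore r s.1 s.2).choose, (hore r s.1 s.2).choose_spec.choose_spec.1⟩
  ore_eq := fun r s => (hore r s.1 s.2).choose_spec.choose_spec.2

theorem goldie_of_qnoeth
    (hore : ∀ r c : R, IsRegular c → ∃ c' r' : R, IsRegular c' ∧ c' * r = r' * c)
    (hnoe : ∀ (Q : Type u) [Ring Q] (φ : R →+* Q), Function.Injective φ →
        (∀ c : R, IsRegular c → IsUnit (φ c)) →
        (∀ q : Q, ∃ c r : R, IsRegular c ∧ φ c * q = φ r) →
        IsNoetherianRing Q) :
    ACCA R ∧ NoIndep R := by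
  letI : OreLocalization.OreSet (regS R) := mkOreSet hore
  set Q₀ := OreLocalization (regS R) R with hQ₀
  set φ₀ : R →+* Q₀ := OreLocalization.numeratorRingHom with hφ₀
  have hinj : Function.Injective φ₀ := by
    apply OreLocalization.numeratorHom_inj
    intro c hc
    exact fun y hy => hc.left (show c * y = c * 0 by rw [hy, mul_zero])
  have hu : ∀ c : R, IsRegular c → IsUnit (φ₀ c) :=
    fun c hc => OreLocalization.numerator_isUnit (⟨c, hc⟩ : regS R)
  have hfr : ∀ q : Q₀, ∃ c r : R, IsRegular c ∧ φ₀ c * q = φ₀ r := by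
    intro q
    induction q using OreLocalization.ind with
    | _ r s =>
      refine ⟨s.1, r, s.2, ?_⟩
      show OreLocalization.numeratorHom s.1 * (r /ₒ s) = OreLocalization.numeratorHom r
      rw [OreLocalization.numeratorHom_apply, OreLocalization.numeratorHom_apply]
      exact OreLocalization.mul_cancel
  have hQnoeth : IsNoetherianRing Q₀ := hnoe Q₀ φ₀ hinj hu hfr
  have hQnoeth' : IsNoetherian Q₀ Q₀ := isNoetherianRing_iff.mp hQnoeth
  constructor
  · -- ACC on left annihilators
    intro f hform hmono
    choose X hX using hform
    set AQ : ℕ → Ideal Q₀ := fun n =>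
      { carrier := {q | ∀ a ∈ X n, q * φ₀ a = 0}
        zero_mem' := fun a _ => zero_mul _
        add_mem' := by
          intro x y hx hy a ha
          rw [add_mul, hx a ha, hy a ha, add_zero]
        smul_mem' := by
          intro c x hx a ha
          rw [smul_eq_mul, mul_assoc, hx a ha, mul_zero] } with hAQ
    have hmemAQ : ∀ n (q : Q₀), q ∈ AQ n ↔ ∀ a ∈ X n, q * φ₀ a = 0 := fun n q => Iff.rfl
    have hiff : ∀ n (q : Q₀) (c r : R), IsRegular c → φ₀ c * q = φ₀ r →
        (q ∈ AQ n ↔ r ∈ f n) := by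
      intro n q c r hc e
      rw [hX n]
      constructor
      · intro hq a ha
        have h1 : φ₀ (r * a) = 0 := by
          rw [map_mul, ← e, mul_assoc, (hmemAQ n q).mp hq a ha, mul_zero]
        exact hinj (h1.trans (map_zero φ₀).symm)
      · intro hr
        rw [hmemAQ]
        intro a ha
        apply cancelQ φ₀ hu hc
        rw [← mul_assoc, e, ← map_mul, hr a ha, map_zero]
    have hmonoAQ : Monotone AQ := by
      intro n m hnm q hq
      obtain ⟨c, r, hc, e⟩ := hfr q
      exact (hiff m q c r hc e).mpr (hmono hnm ((hiff n q c r hc e).mp hq))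
    obtain ⟨n, hn⟩ := monotone_stabilizes_iff_noetherian.mpr hQnoeth' ⟨AQ, hmonoAQ⟩
    refine ⟨n, fun m hm => ?_⟩
    have hAQeq : AQ n = AQ m := hn m hm
    apply Set.ext
    intro r
    have h1 : r ∈ f m ↔ φ₀ r ∈ AQ m :=
      (hiff m (φ₀ r) 1 r isRegular_one (by rw [map_one, one_mul])).symm
    have h2 : r ∈ f n ↔ φ₀ r ∈ AQ n :=
      (hiff n (φ₀ r) 1 r isRegular_one (by rw [map_one, one_mul])).symm
    rw [h1, h2, hAQeq]
  · -- no infinite independent families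
    rintro ⟨g, hg0, hgi⟩
    set G : ℕ → Ideal Q₀ := fun n => fracI hore φ₀ hfr (g n) with hG
    have hG0 : ∀ n, G n ≠ ⊥ := by
      intro n h
      obtain ⟨x, hx, hx0⟩ := Submodule.exists_mem_ne_zero_of_ne_bot (hg0 n)
      have hmem : φ₀ x ∈ G n := ⟨1, x, isRegular_one, hx, by rw [map_one, one_mul]⟩
      rw [h] at hmem
      apply hx0
      apply hinj
      rw [map_zero]
      exact hmem
    have hGi : iSupIndep G := by
      intro n
      have h1 : (⨆ m, ⨆ (_ : m ≠ n), G m) ≤ fracI hore φ₀ hfr (⨆ m, ⨆ (_ : m ≠ n), g m) := by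
        apply iSup₂_le
        intro m hm
        exact fracI_mono (le_iSup₂ (f := fun (m : ℕ) (_ : m ≠ n) => g m) m hm)
      have h2 : fracI hore φ₀ hfr (g n) ⊓ fracI hore φ₀ hfr (⨆ m, ⨆ (_ : m ≠ n), g m) = ⊥ :=
        fracI_inf hinj hu (disjoint_iff.mp (hgi n))
      exact Disjoint.mono_right h1 (disjoint_iff.mpr h2)
    -- contradiction with Noetherian
    have hmonoH : Monotone (fun k => ⨆ m, ⨆ (_ : m < k), G m) := by
      intro k k' hk
      apply iSup₂_le
      intro m hm
      exact le_iSup₂ (f := fun (m : ℕ) (_ : m < k') => G m) m (lt_of_lt_of_le hm hk)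
    obtain ⟨N, hN⟩ := monotone_stabilizes_iff_noetherian.mpr hQnoeth'
      ⟨fun k => ⨆ m, ⨆ (_ : m < k), G m, hmonoH⟩
    have e := hN (N + 1) (Nat.le_succ N)
    have hle : G N ≤ ⨆ m, ⨆ (_ : m < N), G m := by
      have h3 : G N ≤ ⨆ m, ⨆ (_ : m < N + 1), G m :=
        le_iSup₂ (f := fun (m : ℕ) (_ : m < N + 1) => G m) N (Nat.lt_succ_self N)
      have e' : (⨆ m, ⨆ (_ : m < N), G m) = ⨆ m, ⨆ (_ : m < N + 1), G m := e
      rw [e']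
      exact h3
    have hdisj : Disjoint (G N) (⨆ m, ⨆ (_ : m < N), G m) := by
      apply (hGi N).mono_right
      apply iSup₂_le
      intro m hm
      exact le_iSup₂ (f := fun (m : ℕ) (_ : m ≠ N) => G m) m (by omega : m ≠ N)
    exact hG0 N (hdisj.eq_bot_of_le hle)

end Stmt18

/-- Let `R` be a semiprime ring. Then the classical left quotient
ring `Q(R) = C⁻¹R` exists (i.e. the set `C` of regular elements is a left Ore set) and
is left Noetherian if and only if `R` is a semiprime left Goldie ring (ACC on left
annihilators and no infinite direct sum of nonzero left ideals); in which case `Q(R)`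
is semisimple (Artinian). A localization of `R` at `C` is modelled by a ring `Q`
together with an injective ring homomorphism `φ : R → Q` sending regular elements to
units such that every element of `Q` is a left fraction `(φ c)⁻¹ (φ r)`. -/
theorem stmt18 {R : Type u} [Ring R]
    (hsp : ∀ a : R, (∀ x : R, a * x * a = 0) → a = 0) :
    (((∀ (r c : R), IsRegular c → ∃ c' r' : R, IsRegular c' ∧ c' * r = r' * c) ∧
      ∀ (Q : Type u) [Ring Q] (φ : R →+* Q), Function.Injective φ →
        (∀ c : R, IsRegular c → IsUnit (φ c)) →
        (∀ q : Q, ∃ c r : R, IsRegular c ∧ φ c * q = φ r) →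
        IsNoetherianRing Q) ↔
      ((∀ f : ℕ → Set R,
          (∀ n : ℕ, ∃ X : Set R, f n = {q : R | ∀ a ∈ X, q * a = 0}) →
          Monotone f → ∃ n : ℕ, ∀ m : ℕ, n ≤ m → f m = f n) ∧
        ¬ ∃ g : ℕ → Ideal R, (∀ n, g n ≠ ⊥) ∧ iSupIndep g)) ∧
    (((∀ (r c : R), IsRegular c → ∃ c' r' : R, IsRegular c' ∧ c' * r = r' * c) ∧
      ∀ (Q : Type u) [Ring Q] (φ : R →+* Q), Function.Injective φ →
        (∀ c : R, IsRegular c → IsUnit (φ c)) →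
        (∀ q : Q, ∃ c r : R, IsRegular c ∧ φ c * q = φ r) →
        IsNoetherianRing Q) →
      ∀ (Q : Type u) [Ring Q] (φ : R →+* Q), Function.Injective φ →
        (∀ c : R, IsRegular c → IsUnit (φ c)) →
        (∀ q : Q, ∃ c r : R, IsRegular c ∧ φ c * q = φ r) →
        IsSemisimpleRing Q) := by
  constructor
  · constructor
    · rintro ⟨hore, hnoe⟩
      exact Stmt18.goldie_of_qnoeth hore hnoe
    · rintro ⟨hacc, hdim⟩
      refine ⟨Stmt18.ore_exists hsp hacc hdim, ?_⟩
      intro Q _ φ hinj hu hfrac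
      letI : IsSemisimpleRing Q := Stmt18.semisimple_main hsp hacc hdim φ hinj hu hfrac
      infer_instance
  · rintro ⟨hore, hnoe⟩ Q _ φ hinj hu hfrac
    obtain ⟨hacc, hdim⟩ := Stmt18.goldie_of_qnoeth hore hnoe
    exact Stmt18.semisimple_main hsp hacc hdim φ hinj hu hfrac
end
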